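/- arXiv:1810.02963 — 6 statements merged into one kernel-verified Lean document; each statement's English description precedes it below -/
import Mathlib

section
/- Every finite simple graph G with m ≥ 1 edges satisfies lbox(G) ≤ (2^(9·log* √m) + 2) · √m. -/
open Classical

/-- A finite simple graph is an interval graph if each vertex can be assigned a
closed real interval so that distinct vertices are adjacent iff their intervals
intersect. -/
def IsIntervalGraph {V : Type} (I : SimpleGraph V) : Prop :=
  ∃ l r : V → ℝ, ∀ u v : V, u ≠ v →
    (I.Adj u v ↔ (Set.Icc (l u) (r u) ∩ Set.Icc (l v) (r v)).Nonempty)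

/-- A vertex is universal if it is adjacent to every other vertex. -/
def IsUniversal {V : Type} (I : SimpleGraph V) (v : V) : Prop :=
  ∀ u : V, u ≠ v → I.Adj v u

/-- `G` has a local box representation where every vertex is non-universal in at
most `t` of the interval graphs. -/
def LocalBoxRep {V : Type} (G : SimpleGraph V) (t : ℕ) : Prop :=
  ∃ (k : ℕ) (I : Fin k → SimpleGraph V),
    (∀ i, IsIntervalGraph (I i)) ∧
    (∀ u v : V, u ≠ v → (G.Adj u v ↔ ∀ i, (I i).Adj u v)) ∧
    (∀ v : V, {i : Fin k | ¬ IsUniversal (I i) v}.ncard ≤ t)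

/-- Local boxicity of a graph. -/
noncomputable def lbox {V : Type} (G : SimpleGraph V) : ℕ :=
  sInf {t : ℕ | LocalBoxRep G t}

/-- Iterated base-2 logarithm: the number of times `logb 2` must be applied
before the result becomes at most 1. -/
noncomputable def logStar (x : ℝ) : ℕ :=
  sInf {n : ℕ | (Real.logb 2)^[n] x ≤ 1}

/-- A graph is claw-free if it has no induced `K_{1,3}`. -/
def ClawFree {V : Type} (G : SimpleGraph V) : Prop :=
  ∀ v a b c : V, a ≠ b → a ≠ c → b ≠ c →
    ¬ (G.Adj v a ∧ G.Adj v b ∧ G.Adj v c ∧ ¬ G.Adj a b ∧ ¬ G.Adj a c ∧ ¬ G.Adj b c)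

/-- Comparability graph of a poset. -/
def compGraph (α : Type) [PartialOrder α] : SimpleGraph α where
  Adj x y := x ≠ y ∧ (x ≤ y ∨ y ≤ x)
  symm := by
    constructor
    intro x y h
    exact ⟨h.1.symm, h.2.symm⟩
  loopless := by
    constructor
    intro x h
    exact h.1 rfl

/-- A partial linear extension of a poset, given as a duplicate-free list
(ordered by position) which extends the partial order on its elements. -/
def IsPLE {α : Type} [PartialOrder α] [DecidableEq α] (L : List α) : Prop :=
  L.Nodup ∧ ∀ x ∈ L, ∀ y ∈ L, x ≤ y → L.idxOf x ≤ L.idxOf y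

/-- `x` appears below `y` in the list `L`. -/
def Below {α : Type} [DecidableEq α] (L : List α) (x y : α) : Prop :=
  x ∈ L ∧ y ∈ L ∧ L.idxOf x < L.idxOf y

/-- A local realizer of a poset: a family of ple's such that every strict
relation is witnessed, and every incomparable pair is reversed twice. -/
def IsLocalRealizer {α : Type} [PartialOrder α] [DecidableEq α] {k : ℕ}
    (L : Fin k → List α) : Prop :=
  (∀ i, IsPLE (L i)) ∧
  (∀ x y : α, x < y → ∃ i, Below (L i) x y) ∧
  (∀ x y : α, ¬ x ≤ y → ¬ y ≤ x →
    (∃ i, Below (L i) x y) ∧ (∃ i, Below (L i) y x))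

/-- Local dimension of a poset: the least `t` such that some local realizer has
every element in at most `t` ple's. -/
noncomputable def ldim (α : Type) [PartialOrder α] [DecidableEq α] : ℕ :=
  sInf {t : ℕ | ∃ (k : ℕ) (L : Fin k → List α), IsLocalRealizer L ∧
    ∀ x : α, {i : Fin k | x ∈ L i}.ncard ≤ t}

/-- Product dimension of a graph. -/
noncomputable def prodDim {V : Type} (G : SimpleGraph V) : ℕ :=
  sInf {k : ℕ | 0 < k ∧ ∃ f : V → Fin k → ℕ,
    ∀ u v : V, u ≠ v → (G.Adj u v ↔ ∀ i, f u i ≠ f v i)}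

/-- A poset has height at most 2: every chain has at most 2 elements. -/
def HeightAtMostTwo (α : Type) [Preorder α] : Prop :=
  ∀ x y z : α, x ≤ y → y ≤ z → x = y ∨ y = z

namespace LBoxAux

variable {V : Type}

/-- The interval graph determined by interval assignments. -/
def ig (l r : V → ℝ) : SimpleGraph V where
  Adj u v := u ≠ v ∧ (Set.Icc (l u) (r u) ∩ Set.Icc (l v) (r v)).Nonempty
  symm := by
    constructor
    intro u v h
    exact ⟨h.1.symm, by rw [Set.inter_comm]; exact h.2⟩
  loopless := by constructor; intro u h; exact h.1 rfl

lemma ig_isInterval (l r : V → ℝ) : IsIntervalGraph (ig l r) :=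
  ⟨l, r, fun _ _ h => ⟨fun ha => ha.2, fun hn => ⟨h, hn⟩⟩⟩

lemma ig_adj (l r : V → ℝ) (u v : V) :
    (ig l r).Adj u v ↔ u ≠ v ∧ max (l u) (l v) ≤ min (r u) (r v) := by
  show (u ≠ v ∧ _) ↔ _
  rw [Set.Icc_inter_Icc, Set.nonempty_Icc]

/-- The complete graph as an interval graph. -/
def topG : SimpleGraph V := ig (fun _ => 0) (fun _ => 0)

lemma topG_adj (u v : V) (h : u ≠ v) : (topG).Adj u v := by
  rw [topG, ig_adj]
  exact ⟨h, by norm_num⟩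

lemma topG_univ (v : V) : IsUniversal (topG (V := V)) v :=
  fun u hu => topG_adj v u (fun h => hu h.symm)

section PointGadget

/-- Points gadget: vertices of `A` get distinct points, others a big interval. -/
noncomputable def pointG (fv : V → ℝ) (n : ℝ) (A : Set V) : SimpleGraph V :=
  ig (fun v => if v ∈ A then fv v else 0) (fun v => if v ∈ A then fv v else n)

variable {fv : V → ℝ} {n : ℝ} {A : Set V}

lemma pointG_contains (hb : ∀ v, 0 ≤ fv v ∧ fv v ≤ n)
    (u v : V) (h : u ≠ v) (hA : ¬ (u ∈ A ∧ v ∈ A)) : (pointG fv n A).Adj u v := by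
  rw [pointG, ig_adj]
  refine ⟨h, ?_⟩
  have h0n : 0 ≤ n := le_trans (hb u).1 (hb u).2
  by_cases hu : u ∈ A
  · by_cases hv : v ∈ A
    · exact absurd ⟨hu, hv⟩ hA
    · simp only [hu, hv, if_true, if_false]
      exact max_le (le_min le_rfl (hb u).2) (le_min (hb u).1 h0n)
  · by_cases hv : v ∈ A
    · simp only [hu, hv, if_true, if_false]
      exact max_le (le_min h0n (hb v).1) (le_min (hb v).2 le_rfl)
    · simp only [hu, hv, if_false]
      exact max_le (le_min h0n h0n) (le_min h0n h0n)

lemma pointG_kills (u v : V) (hu : u ∈ A) (hv : v ∈ A) (hne : fv u ≠ fv v) :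
    ¬ (pointG fv n A).Adj u v := by
  rw [pointG, ig_adj]
  rintro ⟨-, hle⟩
  simp only [hu, hv, if_true] at hle
  rcases le_or_gt (fv u) (fv v) with h | h
  · have := le_trans (le_max_right (fv u) (fv v)) (le_trans hle (min_le_left _ _))
    exact hne (le_antisymm h this)
  · have := le_trans (le_max_left (fv u) (fv v)) (le_trans hle (min_le_right _ _))
    exact absurd this (not_le.mpr h)

lemma pointG_univ (hb : ∀ v, 0 ≤ fv v ∧ fv v ≤ n) (v : V) (hv : v ∉ A) :
    IsUniversal (pointG fv n A) v := by
  intro u hu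
  exact pointG_contains hb v u (fun h => hu h.symm) (fun h => hv h.1)

end PointGadget

section StarGadget

/-- Star gadget: complete except the edges from `v₀` to `C` are missing. -/
noncomputable def starG (v₀ : V) (C : Set V) : SimpleGraph V :=
  ig (fun u => if u = v₀ then 1/2 else if u ∈ C then 1 else 0)
     (fun u => if u = v₀ then 1/2 else 2)

variable {v₀ : V} {C : Set V}

lemma starG_adj_of_ne (u v : V) (huv : u ≠ v) (hu : u ≠ v₀) (hv : v ≠ v₀) :
    (starG v₀ C).Adj u v := by
  rw [starG, ig_adj]
  refine ⟨huv, ?_⟩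
  simp only [hu, hv, if_false]
  have h1 : (if u ∈ C then (1:ℝ) else 0) ≤ 2 := by split <;> norm_num
  have h2 : (if v ∈ C then (1:ℝ) else 0) ≤ 2 := by split <;> norm_num
  exact max_le (le_min h1 h1) (le_min h2 h2)

lemma starG_adj_center (v : V) (hv : v ≠ v₀) (hvC : v ∉ C) : (starG v₀ C).Adj v₀ v := by
  rw [starG, ig_adj]
  refine ⟨fun h => hv h.symm, ?_⟩
  by_cases h0 : v₀ = v₀
  · simp only [h0, if_true, hv, hvC, if_false]
    norm_num
  · exact absurd rfl h0

lemma starG_kills (v : V) (hv : v ≠ v₀) (hvC : v ∈ C) : ¬ (starG v₀ C).Adj v₀ v := by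
  rw [starG, ig_adj]
  rintro ⟨-, hle⟩
  simp only [hv, hvC, if_true, if_false] at hle
  have h1 := le_trans (le_max_right _ _) (le_trans hle (min_le_left _ _))
  norm_num at h1

lemma starG_univ (w : V) (hw : w ≠ v₀) (hwC : w ∉ C) : IsUniversal (starG v₀ C) w := by
  intro u hu
  by_cases huv : u = v₀
  · rw [huv]
    exact ((starG v₀ C).adj_comm _ _).mp (starG_adj_center w hw hwC)
  · exact starG_adj_of_ne w u (fun h => hu h.symm) hw huv

lemma starG_contains (G : SimpleGraph V) (hC : ∀ u ∈ C, ¬ G.Adj v₀ u)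
    (u v : V) (hadj : G.Adj u v) : (starG v₀ C).Adj u v := by
  by_cases hu : u = v₀
  · rw [hu] at hadj ⊢
    exact starG_adj_center v (fun h => G.loopless.irrefl _ (h ▸ hadj)) (fun hC' => hC v hC' hadj)
  · by_cases hv : v = v₀
    · rw [hv] at hadj ⊢
      exact ((starG v₀ C).adj_comm _ _).mp
        (starG_adj_center u (fun h => G.loopless.irrefl _ (h ▸ hadj)) (fun hC' => hC u hC' hadj.symm))
    · exact starG_adj_of_ne u v (G.ne_of_adj hadj) hu hv

end StarGadget

section BicliqueGadget

/-- Biclique gadget: complete except all edges between `A` and `B \ A` are missing. -/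
noncomputable def bicG (A B : Set V) : SimpleGraph V :=
  ig (fun u => if u ∈ A then 0 else if u ∈ B then 1 else 0)
     (fun u => if u ∈ A then 0 else 1)

variable {A B : Set V}

lemma bicG_adj (u v : V) (huv : u ≠ v) (h : ¬ (u ∈ A ∧ v ∈ B ∧ v ∉ A) )
    (h' : ¬ (v ∈ A ∧ u ∈ B ∧ u ∉ A)) : (bicG A B).Adj u v := by
  rw [bicG, ig_adj]
  refine ⟨huv, ?_⟩
  by_cases hu : u ∈ A <;> by_cases hv : v ∈ A
  · simp only [hu, hv, if_true]; norm_num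
  · have hvB : v ∉ B := fun hvB => h ⟨hu, hvB, hv⟩
    simp only [hu, hv, hvB, if_true, if_false]; norm_num
  · have huB : u ∉ B := fun huB => h' ⟨hv, huB, hu⟩
    simp only [hu, hv, huB, if_true, if_false]; norm_num
  · simp only [hu, hv, if_false]
    have h1 : (if u ∈ B then (1:ℝ) else 0) ≤ 1 := by split <;> norm_num
    have h2 : (if v ∈ B then (1:ℝ) else 0) ≤ 1 := by split <;> norm_num
    exact max_le (le_min h1 h1) (le_min h2 h2)

lemma bicG_kills (u v : V) (hu : u ∈ A) (hv : v ∈ B) (hvA : v ∉ A) :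
    ¬ (bicG A B).Adj u v := by
  rw [bicG, ig_adj]
  rintro ⟨-, hle⟩
  simp only [hu, hv, hvA, if_true, if_false] at hle
  have h1 := le_trans (le_max_right _ _) (le_trans hle (min_le_left _ _))
  norm_num at h1

lemma bicG_univ (w : V) (hwA : w ∉ A) (hwB : w ∉ B) : IsUniversal (bicG A B) w := by
  intro u hu
  exact bicG_adj w u (fun h => hu h.symm) (fun h => hwA h.1) (fun h => hwB h.2.1)

lemma bicG_contains (G : SimpleGraph V) (hAB : ∀ x ∈ A, ∀ y ∈ B, ¬ G.Adj x y)
    (u v : V) (hadj : G.Adj u v) : (bicG A B).Adj u v :=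
  bicG_adj u v (G.ne_of_adj hadj)
    (fun h => hAB u h.1 v h.2.1 hadj) (fun h => hAB v h.1 u h.2.1 hadj.symm)

end BicliqueGadget

section Partition

variable {V : Type} [DecidableEq V]

lemma exists_peel (s : ℕ) (deg : V → ℕ) :
    ∀ (T : Finset V), (∀ v ∈ T, deg v ≤ s) → s < ∑ v ∈ T, deg v →
      ∃ Q ⊆ T, s < ∑ v ∈ Q, deg v ∧ ∑ v ∈ Q, deg v ≤ 2 * s := by
  intro T
  induction T using Finset.strongInduction with
  | _ T ih =>
    intro hdeg hlt
    by_cases h2 : ∑ v ∈ T, deg v ≤ 2 * s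
    · exact ⟨T, Finset.Subset.refl T, hlt, h2⟩
    · have hT : T.Nonempty := by
        rcases Finset.eq_empty_or_nonempty T with h | h
        · rw [h, Finset.sum_empty] at hlt; omega
        · exact h
      obtain ⟨v, hv⟩ := hT
      have hsub : T.erase v ⊂ T := Finset.erase_ssubset hv
      have hsum : ∑ w ∈ T.erase v, deg w + deg v = ∑ w ∈ T, deg w :=
        Finset.sum_erase_add T deg hv
      have hlt' : s < ∑ w ∈ T.erase v, deg w := by
        have := hdeg v hv; omega
      obtain ⟨Q, hQ, hq1, hq2⟩ :=
        ih (T.erase v) hsub (fun w hw => hdeg w (Finset.mem_of_mem_erase hw)) hlt'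
      exact ⟨Q, hQ.trans (Finset.erase_subset v T), hq1, hq2⟩

lemma exists_partition (s : ℕ) (hs : 0 < s) (deg : V → ℕ) :
    ∀ (T : Finset V), (∀ v ∈ T, deg v ≤ s) →
      ∃ (g : ℕ) (f : V → ℕ), 0 < g ∧ (∀ v, f v < g) ∧
        (∀ k, ∑ v ∈ T.filter (fun v => f v = k), deg v ≤ 2 * s) ∧
        g ≤ (∑ v ∈ T, deg v) / (s + 1) + 1 := by
  intro T
  induction T using Finset.strongInduction with
  | _ T ih =>
    intro hdeg
    by_cases h2 : ∑ v ∈ T, deg v ≤ 2 * s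
    · refine ⟨1, fun _ => 0, Nat.one_pos, fun _ => Nat.one_pos, fun k => ?_, Nat.succ_le_succ (Nat.zero_le _)⟩
      calc ∑ v ∈ T.filter (fun v => (0:ℕ) = k), deg v
          ≤ ∑ v ∈ T, deg v := Finset.sum_le_sum_of_subset (Finset.filter_subset _ T)
        _ ≤ 2 * s := h2
    · obtain ⟨Q, hQT, hQs, hQ2⟩ := exists_peel s deg T hdeg (by omega)
      have hQne : Q.Nonempty := by
        rcases Finset.eq_empty_or_nonempty Q with h | h
        · rw [h, Finset.sum_empty] at hQs; omega
        · exact h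
      have hsub : T \ Q ⊂ T := Finset.sdiff_ssubset hQT hQne
      obtain ⟨g, f, hg0, hfg, hfil, hgle⟩ :=
        ih (T \ Q) hsub (fun v hv => hdeg v (Finset.mem_sdiff.mp hv).1)
      refine ⟨g + 1, fun v => if v ∈ Q then g else f v, by omega, fun v => ?_, fun k => ?_, ?_⟩
      · by_cases hv : v ∈ Q <;> simp only [hv, if_true, if_false]
        · omega
        · exact lt_trans (hfg v) (by omega)
      · -- filter sum
        have hsplit : T.filter (fun v => (if v ∈ Q then g else f v) = k) ⊆
            Q ∪ (T \ Q).filter (fun v => f v = k) := by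
          intro v hv
          rw [Finset.mem_filter] at hv
          by_cases hvQ : v ∈ Q
          · exact Finset.mem_union_left _ hvQ
          · refine Finset.mem_union_right _ (Finset.mem_filter.mpr ⟨Finset.mem_sdiff.mpr ⟨hv.1, hvQ⟩, ?_⟩)
            simpa [hvQ] using hv.2
        by_cases hk : k = g
        · -- then the (T\Q)-filter part is empty
          have hempty : (T \ Q).filter (fun v => f v = k) = ∅ := by
            rw [Finset.filter_eq_empty_iff]
            intro v _ h
            have := hfg v
            omega
          calc ∑ v ∈ T.filter (fun v => (if v ∈ Q then g else f v) = k), deg v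
              ≤ ∑ v ∈ Q ∪ (T \ Q).filter (fun v => f v = k), deg v :=
                Finset.sum_le_sum_of_subset hsplit
            _ = ∑ v ∈ Q, deg v + ∑ v ∈ (T \ Q).filter (fun v => f v = k), deg v := by
                refine Finset.sum_union (Finset.disjoint_left.mpr ?_)
                intro v hvQ hvf
                exact (Finset.mem_sdiff.mp (Finset.mem_filter.mp hvf).1).2 hvQ
            _ ≤ 2 * s := by rw [hempty, Finset.sum_empty]; omega
        · -- the Q part contributes nothing: v ∈ Q → value g ≠ k
          have hsub2 : T.filter (fun v => (if v ∈ Q then g else f v) = k) ⊆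
              (T \ Q).filter (fun v => f v = k) := by
            intro v hv
            rw [Finset.mem_filter] at hv
            by_cases hvQ : v ∈ Q
            · exfalso
              apply hk
              have h2 := hv.2
              simp only [hvQ, if_true] at h2
              omega
            · exact Finset.mem_filter.mpr ⟨Finset.mem_sdiff.mpr ⟨hv.1, hvQ⟩, by simpa [hvQ] using hv.2⟩
          exact le_trans (Finset.sum_le_sum_of_subset hsub2) (hfil k)
      · -- count bound
        have hTQ : ∑ v ∈ T \ Q, deg v + ∑ v ∈ Q, deg v = ∑ v ∈ T, deg v :=
          Finset.sum_sdiff hQT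
        have h1 : ∑ v ∈ T \ Q, deg v + (s + 1) ≤ ∑ v ∈ T, deg v := by omega
        have h2' : (s + 1) ≤ ∑ v ∈ T, deg v := by omega
        have key : (∑ v ∈ T \ Q, deg v) / (s + 1) + 1 ≤ (∑ v ∈ T, deg v) / (s + 1) := by
          rw [Nat.div_eq_sub_div (by omega) h2']
          have : ∑ v ∈ T \ Q, deg v ≤ ∑ v ∈ T, deg v - (s + 1) := by omega
          exact Nat.add_le_add_right (Nat.div_le_div_right this) 1
        omega

end Partition

section NcardHelpers

lemma ncard_sum_le {α β : Type} [Finite α] [Finite β] (P : α ⊕ β → Prop) :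
    {x : α ⊕ β | P x}.ncard ≤ {a : α | P (Sum.inl a)}.ncard + {b : β | P (Sum.inr b)}.ncard := by
  have heq : {x : α ⊕ β | P x} =
      (Sum.inl '' {a : α | P (Sum.inl a)}) ∪ (Sum.inr '' {b : β | P (Sum.inr b)}) := by
    ext x
    cases x with
    | inl a => simp
    | inr b => simp
  rw [heq]
  refine le_trans (Set.ncard_union_le _ _) ?_
  rw [Set.ncard_image_of_injective _ Sum.inl_injective,
    Set.ncard_image_of_injective _ Sum.inr_injective]

lemma ncard_le_finset_card {α : Type} {s : Set α} {F : Finset α} (h : s ⊆ ↑F) :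
    s.ncard ≤ F.card := by
  simpa using Set.ncard_le_ncard h F.finite_toSet

lemma ncard_le_of_empty {α : Type} {s : Set α} (h : s = ∅) (n : ℕ) : s.ncard ≤ n := by
  simp [h]

end NcardHelpers

section Gadget

variable {V : Type}

/-- The index type of the family of gadget interval graphs. -/
abbrev GIdx (V : Type) (M : ℕ) : Type := Bool ⊕ (V ⊕ ((V × Fin M) ⊕ (Fin M × Fin M)))

/-- The family of gadget interval graphs. -/
noncomputable def gadget (G : SimpleGraph V) (fv : V → ℝ) (nn : ℝ) (Z H L : Finset V)
    (f : V → ℕ) {M : ℕ} : GIdx V M → SimpleGraph V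
  | .inl b => if b then pointG fv nn ↑Z else bicG ↑Z ((↑Z : Set V)ᶜ)
  | .inr (.inl h) => if h ∈ H then starG h {u | ¬ G.Adj h u ∧ u ≠ h} else topG
  | .inr (.inr (.inl (u, j))) =>
      if u ∈ L ∧ (f u = j.val ∨ ∃ w ∈ L.filter (fun x => f x = j.val), G.Adj u w)
      then starG u {w | w ∈ L.filter (fun x => f x = j.val) ∧ ¬ G.Adj u w}
      else topG
  | .inr (.inr (.inr (j, j'))) =>
      if j ≠ j' then
        bicG ↑((L.filter (fun x => f x = j.val)).filter
            (fun x => ∀ w ∈ L.filter (fun y => f y = j'.val), ¬ G.Adj x w))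
          ↑(L.filter (fun x => f x = j'.val))
      else topG

variable {G : SimpleGraph V} {fv : V → ℝ} {nn : ℝ} {Z H L : Finset V} {f : V → ℕ} {M : ℕ}

lemma gadget_interval (j : GIdx V M) : IsIntervalGraph (gadget G fv nn Z H L f j) := by
  rcases j with b | (h | (⟨u, j⟩ | ⟨j, j'⟩)) <;>
    simp only [gadget] <;>
    split <;>
    first
      | exact ig_isInterval _ _
      | (split <;> exact ig_isInterval _ _)

lemma gadget_contains (hb : ∀ v, 0 ≤ fv v ∧ fv v ≤ nn)
    (hZad : ∀ x ∈ Z, ∀ y, ¬ G.Adj x y)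
    (j : GIdx V M) (u v : V) (hadj : G.Adj u v) :
    (gadget G fv nn Z H L f j).Adj u v := by
  have hne : u ≠ v := G.ne_of_adj hadj
  rcases j with b | (h | (⟨w, j⟩ | ⟨j, j'⟩)) <;> simp only [gadget]
  · split
    · refine pointG_contains hb u v hne ?_
      rintro ⟨hu, -⟩
      exact hZad u hu v hadj
    · refine bicG_contains G ?_ u v hadj
      intro x hx y _
      exact hZad x hx y
  · split
    · exact starG_contains G (fun y hy => hy.1) u v hadj
    · exact topG_adj u v hne
  · split
    · exact starG_contains G (fun y hy => hy.2) u v hadj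
    · exact topG_adj u v hne
  · split
    · refine bicG_contains G ?_ u v hadj
      intro x hx y hy
      exact (Finset.mem_filter.mp hx).2 y hy
    · exact topG_adj u v hne

end Gadget

lemma main_con {V : Type} [Fintype V] (G : SimpleGraph V) (m : ℕ)
    (hm : G.edgeSet.ncard = m) (h2m : 2 ≤ m) :
    LocalBoxRep G (11 * Nat.sqrt m + 13) := by
  classical
  set s := Nat.sqrt m with hsdef
  have hs1 : 1 ≤ s := Nat.le_sqrt.mpr (by omega)
  have hms : m ≤ s * s + 2 * s := by
    have h1 : m < s.succ * s.succ := by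
      rw [hsdef]; exact Nat.lt_succ_sqrt m
    have h2 : s.succ * s.succ = s * s + 2 * s + 1 := by rw [Nat.succ_eq_add_one]; ring
    omega
  have hcard : G.edgeFinset.card = m := by
    rw [← hm, ← SimpleGraph.coe_edgeFinset, Set.ncard_coe_finset]
  have hsum : ∑ v, G.degree v = 2 * m := by
    rw [G.sum_degrees_eq_twice_card_edges, hcard]
  set Z : Finset V := Finset.univ.filter (fun v => G.degree v = 0) with hZdef
  set H : Finset V := Finset.univ.filter (fun v => s < G.degree v) with hHdef
  set L : Finset V := Finset.univ.filter (fun v => 0 < G.degree v ∧ G.degree v ≤ s) with hLdef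
  have hLsum : ∑ v ∈ L, G.degree v ≤ 2 * m := by
    rw [← hsum]
    exact Finset.sum_le_sum_of_subset (Finset.subset_univ L)
  obtain ⟨g, f, hg0, hfg, hblk, hgle⟩ :=
    exists_partition s hs1 (fun v => G.degree v) L (fun v hv => by
      rw [hLdef] at hv
      exact (Finset.mem_filter.mp hv).2.2)
  set M := 2 * s + 4 with hMdef
  have hgM : g ≤ 2 * s + 3 := by
    have h1 : (∑ v ∈ L, G.degree v) / (s + 1) ≤ (2 * (s * s) + 4 * s) / (s + 1) :=
      Nat.div_le_div_right (by omega)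
    have h2 : (2 * (s * s) + 4 * s) / (s + 1) < 2 * s + 3 := by
      rw [Nat.div_lt_iff_lt_mul (by omega)]
      ring_nf
      nlinarith
    omega
  have hfM : ∀ v, f v < M := fun v => by
    have := hfg v; omega
  have hHcard : H.card ≤ 2 * s + 2 := by
    have h1 : H.card * (s + 1) ≤ ∑ v ∈ H, G.degree v := by
      simpa using Finset.card_nsmul_le_sum H (fun v => G.degree v) (s + 1)
        (fun x hx => (Finset.mem_filter.mp hx).2)
    have h2 : ∑ v ∈ H, G.degree v ≤ 2 * m := by
      rw [← hsum]
      exact Finset.sum_le_sum_of_subset (Finset.subset_univ H)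
    nlinarith
  -- the vertex embedding
  set fv : V → ℝ := fun v => ((Fintype.equivFin V v : ℕ) : ℝ) with hfv
  set nn : ℝ := (Fintype.card V : ℝ) with hnn
  have hb : ∀ v, 0 ≤ fv v ∧ fv v ≤ nn := by
    intro v
    constructor
    · positivity
    · show ((Fintype.equivFin V v : ℕ) : ℝ) ≤ (Fintype.card V : ℝ)
      exact_mod_cast le_of_lt (Fintype.equivFin V v).2
  have hZad : ∀ x ∈ Z, ∀ y, ¬ G.Adj x y := by
    intro x hx y hxy
    have hdeg : G.degree x = 0 := (Finset.mem_filter.mp hx).2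
    rw [← SimpleGraph.card_neighborFinset_eq_degree, Finset.card_eq_zero] at hdeg
    have : y ∈ G.neighborFinset x := (SimpleGraph.mem_neighborFinset G x y).mpr hxy
    rw [hdeg] at this
    exact absurd this (Finset.notMem_empty y)
  -- the family
  have hmemZ : ∀ x, x ∈ Z ↔ G.degree x = 0 := by
    intro x; rw [hZdef]; simp
  have hmemH : ∀ x, x ∈ H ↔ s < G.degree x := by
    intro x; rw [hHdef]; simp
  have hmemL : ∀ x, x ∈ L ↔ 0 < G.degree x ∧ G.degree x ≤ s := by
    intro x; rw [hLdef]; simp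
  set e := Fintype.equivFin (GIdx V M) with he
  refine ⟨Fintype.card (GIdx V M), fun i => gadget G fv nn Z H L f (e.symm i),
    fun i => gadget_interval _, ?_, ?_⟩
  · -- adjacency characterization
    intro u v huv
    constructor
    · intro hadj i
      exact gadget_contains hb hZad _ u v hadj
    · intro hall
      by_contra hnadj
      have hkill : ∃ j : GIdx V M, ¬ (gadget G fv nn Z H L f j).Adj u v := by
        rcases Nat.eq_zero_or_pos (G.degree u) with hu0 | hu0
        · have huZ : u ∈ Z := (hmemZ u).mpr hu0
          rcases Nat.eq_zero_or_pos (G.degree v) with hv0 | hv0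
          · -- both isolated : points gadget
            have hvZ : v ∈ Z := (hmemZ v).mpr hv0
            refine ⟨Sum.inl true, ?_⟩
            have hred : gadget G fv nn Z H L f (M := M) (Sum.inl true) = pointG fv nn ↑Z := by
              simp [gadget]
            rw [hred]
            refine pointG_kills u v (Finset.mem_coe.mpr huZ) (Finset.mem_coe.mpr hvZ) ?_
            intro hfvuv
            apply huv
            rw [hfv] at hfvuv
            simp only at hfvuv
            have hval : (Fintype.equivFin V u : ℕ) = (Fintype.equivFin V v : ℕ) := by
              exact_mod_cast hfvuv
            exact (Fintype.equivFin V).injective (Fin.ext hval)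
          · -- u isolated, v not : biclique gadget
            have hvZ : v ∉ Z := by
              rw [hmemZ]; omega
            refine ⟨Sum.inl false, ?_⟩
            have hred : gadget G fv nn Z H L f (M := M) (Sum.inl false) = bicG ↑Z ((↑Z : Set V)ᶜ) := by
              simp [gadget]
            rw [hred]
            have h1 : v ∈ ((↑Z : Set V)ᶜ) := fun h => hvZ (Finset.mem_coe.mp h)
            have h2 : v ∉ (↑Z : Set V) := fun h => hvZ (Finset.mem_coe.mp h)
            exact bicG_kills u v (Finset.mem_coe.mpr huZ) h1 h2
        · rcases Nat.eq_zero_or_pos (G.degree v) with hv0 | hv0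
          · -- v isolated, u not
            have hvZ : v ∈ Z := (hmemZ v).mpr hv0
            have huZ : u ∉ Z := by rw [hmemZ]; omega
            refine ⟨Sum.inl false, ?_⟩
            have hred : gadget G fv nn Z H L f (M := M) (Sum.inl false) = bicG ↑Z ((↑Z : Set V)ᶜ) := by
              simp [gadget]
            rw [hred]
            have h1 : u ∈ ((↑Z : Set V)ᶜ) := fun h => huZ (Finset.mem_coe.mp h)
            have h2 : u ∉ (↑Z : Set V) := fun h => huZ (Finset.mem_coe.mp h)
            intro hadj
            exact bicG_kills v u (Finset.mem_coe.mpr hvZ) h1 h2 hadj.symm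
          · rcases lt_or_ge s (G.degree u) with huH | huL
            · -- u has high degree
              have hu : u ∈ H := (hmemH u).mpr huH
              refine ⟨Sum.inr (Sum.inl u), ?_⟩
              have hred : gadget G fv nn Z H L f (M := M) (Sum.inr (Sum.inl u)) =
                  starG u {w | ¬ G.Adj u w ∧ w ≠ u} := by
                simp [gadget, hu]
              rw [hred]
              have h1 : v ∈ {w | ¬ G.Adj u w ∧ w ≠ u} := ⟨hnadj, fun h => huv h.symm⟩
              exact starG_kills v (fun h => huv h.symm) h1
            · rcases lt_or_ge s (G.degree v) with hvH | hvL
              · -- v has high degree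
                have hv : v ∈ H := (hmemH v).mpr hvH
                refine ⟨Sum.inr (Sum.inl v), ?_⟩
                have hred : gadget G fv nn Z H L f (M := M) (Sum.inr (Sum.inl v)) =
                    starG v {w | ¬ G.Adj v w ∧ w ≠ v} := by
                  simp [gadget, hv]
                rw [hred]
                have h1 : u ∈ {w | ¬ G.Adj v w ∧ w ≠ v} := ⟨fun h => hnadj h.symm, huv⟩
                intro hadj
                exact starG_kills u huv h1 hadj.symm
              · -- both in L
                have huL' : u ∈ L := (hmemL u).mpr ⟨hu0, huL⟩
                have hvL' : v ∈ L := (hmemL v).mpr ⟨hv0, hvL⟩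
                have hvB : v ∈ L.filter (fun x => f x = f v) :=
                  Finset.mem_filter.mpr ⟨hvL', rfl⟩
                by_cases hgate : u ∈ L ∧ (f u = (⟨f v, hfM v⟩ : Fin M).val ∨
                    ∃ w ∈ L.filter (fun x => f x = (⟨f v, hfM v⟩ : Fin M).val), G.Adj u w)
                · refine ⟨Sum.inr (Sum.inr (Sum.inl (u, ⟨f v, hfM v⟩))), ?_⟩
                  have hred : gadget G fv nn Z H L f (M := M)
                      (Sum.inr (Sum.inr (Sum.inl (u, ⟨f v, hfM v⟩)))) =
                      starG u {w | w ∈ L.filter (fun x => f x = (⟨f v, hfM v⟩ : Fin M).val)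
                        ∧ ¬ G.Adj u w} := by
                    simp only [gadget, if_pos hgate]
                  rw [hred]
                  have h1 : v ∈ {w | w ∈ L.filter (fun x => f x = (⟨f v, hfM v⟩ : Fin M).val)
                      ∧ ¬ G.Adj u w} := ⟨hvB, hnadj⟩
                  exact starG_kills v (fun h => huv h.symm) h1
                · push_neg at hgate
                  obtain ⟨hfu, hnonbr⟩ := hgate huL'
                  have hjne : (⟨f u, hfM u⟩ : Fin M) ≠ (⟨f v, hfM v⟩ : Fin M) := by
                    intro hcon
                    exact hfu (congrArg Fin.val hcon)
                  refine ⟨Sum.inr (Sum.inr (Sum.inr (⟨f u, hfM u⟩, ⟨f v, hfM v⟩))), ?_⟩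
                  simp only [gadget, if_pos hjne]
                  refine bicG_kills u v (Finset.mem_coe.mpr ?_) (Finset.mem_coe.mpr ?_) ?_
                  · simp only [Finset.mem_filter]
                    refine ⟨⟨huL', trivial⟩, ?_⟩
                    intro w hw
                    exact hnonbr w (Finset.mem_filter.mpr hw)
                  · exact Finset.mem_filter.mpr ⟨hvL', rfl⟩
                  · intro hcon
                    simp only [Finset.mem_coe, Finset.mem_filter] at hcon
                    exact hfu hcon.1.2.symm
      obtain ⟨j, hj⟩ := hkill
      apply hj
      have h2 := hall (e j)
      simpa using h2
  · -- locality count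
    intro v
    have himg : {i : Fin (Fintype.card (GIdx V M)) |
        ¬ IsUniversal ((fun i => gadget G fv nn Z H L f (e.symm i)) i) v} =
        ⇑e '' {j : GIdx V M | ¬ IsUniversal (gadget G fv nn Z H L f j) v} := by
      ext i
      simp only [Set.mem_setOf_eq, Set.mem_image]
      constructor
      · intro h
        exact ⟨e.symm i, h, by simp⟩
      · rintro ⟨j, hj, rfl⟩
        simpa using hj
    rw [himg, Set.ncard_image_of_injective _ e.injective]
    -- bound for the two global gadgets
    have b1 : {a : Bool | ¬ IsUniversal (gadget G fv nn Z H L f (M := M) (Sum.inl a)) v}.ncard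
        ≤ 2 := by
      refine le_trans (ncard_le_finset_card (F := (Finset.univ : Finset Bool))
        (fun x _ => Finset.mem_coe.mpr (Finset.mem_univ x))) ?_
      simp
    -- bound for the high-degree star gadgets
    have b2 : {a : V | ¬ IsUniversal (gadget G fv nn Z H L f (M := M)
        (Sum.inr (Sum.inl a))) v}.ncard ≤ H.card := by
      refine ncard_le_finset_card ?_
      intro x hx
      simp only [Set.mem_setOf_eq] at hx
      by_contra hxH
      apply hx
      have hxH' : x ∉ H := fun h => hxH (Finset.mem_coe.mpr h)
      simp only [gadget, if_neg hxH']
      exact topG_univ v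
    -- bound for the block star gadgets
    have b3 : {p : V × Fin M | ¬ IsUniversal (gadget G fv nn Z H L f (M := M)
        (Sum.inr (Sum.inr (Sum.inl p)))) v}.ncard ≤ 5 * s + 1 := by
      by_cases hvL : v ∈ L
      · refine le_trans (ncard_le_finset_card (F :=
          (({v} ×ˢ (insert (⟨f v, hfM v⟩ : Fin M)
            ((G.neighborFinset v).image (fun w => (⟨f w, hfM w⟩ : Fin M))))) ∪
          (((L.filter (fun x => f x = f v)) ∪
            (L.filter (fun x => f x = f v)).biUnion (fun w => G.neighborFinset w)) ×ˢ
              {(⟨f v, hfM v⟩ : Fin M)}))) ?_) ?_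
        · rintro ⟨u, j⟩ hp
          simp only [Set.mem_setOf_eq] at hp
          by_cases hgate : u ∈ L ∧ (f u = j.val ∨
              ∃ w ∈ L.filter (fun x => f x = j.val), G.Adj u w)
          · have hvC : v = u ∨ (v ∈ L ∧ f v = j.val ∧ ¬ G.Adj u v) := by
              by_contra hcon
              push_neg at hcon
              apply hp
              simp only [gadget, if_pos hgate]
              refine starG_univ v hcon.1 ?_
              rintro ⟨hwf, hna⟩
              have h5 := Finset.mem_filter.mp hwf
              exact hna (hcon.2 h5.1 h5.2)
            refine Finset.mem_coe.mpr ?_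
            rcases hvC with rfl | ⟨hvL2, hjval, hnadj⟩
            · -- star centered at v
              refine Finset.mem_union_left _ (Finset.mem_product.mpr
                ⟨Finset.mem_singleton_self v, ?_⟩)
              rcases hgate.2 with hfu | ⟨w, hw, hadj⟩
              · have : j = (⟨f v, hfM v⟩ : Fin M) := Fin.ext hfu.symm
                rw [this]
                exact Finset.mem_insert_self _ _
              · have hwval := (Finset.mem_filter.mp hw).2
                have : j = (⟨f w, hfM w⟩ : Fin M) := Fin.ext hwval.symm
                rw [this]
                refine Finset.mem_insert_of_mem (Finset.mem_image.mpr
                  ⟨w, (G.mem_neighborFinset v w).mpr hadj, rfl⟩)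
            · -- v is in the target block
              have hjv : j = (⟨f v, hfM v⟩ : Fin M) := Fin.ext hjval.symm
              refine Finset.mem_union_right _ (Finset.mem_product.mpr
                ⟨?_, by rw [hjv]; exact Finset.mem_singleton_self _⟩)
              rcases hgate.2 with hfu | ⟨w, hw, hadj⟩
              · refine Finset.mem_union_left _ (Finset.mem_filter.mpr ⟨hgate.1, ?_⟩)
                rw [hfu, hjv]
              · refine Finset.mem_union_right _ (Finset.mem_biUnion.mpr ⟨w, ?_, ?_⟩)
                · have h6 := Finset.mem_filter.mp hw
                  refine Finset.mem_filter.mpr ⟨h6.1, ?_⟩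
                  rw [h6.2, hjv]
                · exact (G.mem_neighborFinset w u).mpr hadj.symm
          · exfalso
            apply hp
            simp only [gadget, if_neg hgate]
            exact topG_univ v
        · -- cardinality computation
          refine le_trans (Finset.card_union_le _ _) ?_
          have hc1 : (({v} : Finset V) ×ˢ (insert (⟨f v, hfM v⟩ : Fin M)
              ((G.neighborFinset v).image (fun w => (⟨f w, hfM w⟩ : Fin M))))).card
              ≤ 1 + s := by
            rw [Finset.card_product, Finset.card_singleton, one_mul]
            refine le_trans (Finset.card_insert_le _ _) ?_
            have := le_trans (Finset.card_image_le
              (f := fun w => (⟨f w, hfM w⟩ : Fin M)) (s := G.neighborFinset v))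
              (le_of_eq (G.card_neighborFinset_eq_degree v))
            have hdeg : G.degree v ≤ s := ((hmemL v).mp hvL).2
            omega
          have hc2 : (((L.filter (fun x => f x = f v)) ∪
              (L.filter (fun x => f x = f v)).biUnion (fun w => G.neighborFinset w)) ×ˢ
                ({(⟨f v, hfM v⟩ : Fin M)} : Finset (Fin M))).card ≤ 4 * s := by
            rw [Finset.card_product, Finset.card_singleton, mul_one]
            refine le_trans (Finset.card_union_le _ _) ?_
            have h7 : (L.filter (fun x => f x = f v)).card ≤ 2 * s := by
              refine le_trans ?_ (hblk (f v))
              have := Finset.card_nsmul_le_sum (L.filter (fun x => f x = f v))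
                (fun v => G.degree v) 1
                (fun x hx => ((hmemL x).mp (Finset.mem_filter.mp hx).1).1)
              simpa using this
            have h8 : ((L.filter (fun x => f x = f v)).biUnion
                (fun w => G.neighborFinset w)).card ≤ 2 * s := by
              refine le_trans (Finset.card_biUnion_le) ?_
              refine le_trans ?_ (hblk (f v))
              refine Finset.sum_le_sum ?_
              intro w _
              exact le_of_eq (G.card_neighborFinset_eq_degree w)
            omega
          omega
      · -- v not in L : no such gadget makes v non-universal
        refine ncard_le_of_empty ?_ _
        rw [Set.eq_empty_iff_forall_notMem]
        rintro ⟨u, j⟩ hp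
        simp only [Set.mem_setOf_eq] at hp
        apply hp
        by_cases hgate : u ∈ L ∧ (f u = j.val ∨
            ∃ w ∈ L.filter (fun x => f x = j.val), G.Adj u w)
        · simp only [gadget, if_pos hgate]
          refine starG_univ v ?_ ?_
          · intro h
            rw [h] at hvL
            exact hvL hgate.1
          · rintro ⟨hwf, -⟩
            exact hvL (Finset.mem_filter.mp hwf).1
        · simp only [gadget, if_neg hgate]
          exact topG_univ v
    -- bound for the biclique gadgets
    have b4 : {p : Fin M × Fin M | ¬ IsUniversal (gadget G fv nn Z H L f (M := M)
        (Sum.inr (Sum.inr (Sum.inr p)))) v}.ncard ≤ 2 * M := by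
      by_cases hvL : v ∈ L
      · refine le_trans (ncard_le_finset_card (F :=
          (({(⟨f v, hfM v⟩ : Fin M)} ×ˢ (Finset.univ : Finset (Fin M))) ∪
           ((Finset.univ : Finset (Fin M)) ×ˢ {(⟨f v, hfM v⟩ : Fin M)}))) ?_) ?_
        · rintro ⟨j, j'⟩ hp
          simp only [Set.mem_setOf_eq] at hp
          by_cases hjne : j ≠ j'
          · have hvC : (v ∈ L ∧ f v = j.val) ∨ (v ∈ L ∧ f v = j'.val) := by
              by_contra hcon
              push_neg at hcon
              apply hp
              simp only [gadget, if_pos hjne]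
              refine bicG_univ v ?_ ?_
              · intro hmem
                simp only [Finset.mem_coe, Finset.mem_filter] at hmem
                exact hcon.1 hmem.1.1 hmem.1.2
              · intro hmem
                simp only [Finset.mem_coe, Finset.mem_filter] at hmem
                exact hcon.2 hmem.1 hmem.2
            refine Finset.mem_coe.mpr ?_
            rcases hvC with ⟨-, hval⟩ | ⟨-, hval⟩
            · refine Finset.mem_union_left _ (Finset.mem_product.mpr ⟨?_, Finset.mem_univ _⟩)
              have : j = (⟨f v, hfM v⟩ : Fin M) := Fin.ext hval.symm
              rw [this]
              exact Finset.mem_singleton_self _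
            · refine Finset.mem_union_right _ (Finset.mem_product.mpr ⟨Finset.mem_univ _, ?_⟩)
              have : j' = (⟨f v, hfM v⟩ : Fin M) := Fin.ext hval.symm
              rw [this]
              exact Finset.mem_singleton_self _
          · exfalso
            apply hp
            simp only [gadget, if_neg hjne]
            exact topG_univ v
        · refine le_trans (Finset.card_union_le _ _) ?_
          rw [Finset.card_product, Finset.card_product, Finset.card_singleton,
            Finset.card_univ, one_mul, mul_one, Fintype.card_fin]
          omega
      · refine ncard_le_of_empty ?_ _
        rw [Set.eq_empty_iff_forall_notMem]
        rintro ⟨j, j'⟩ hp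
        simp only [Set.mem_setOf_eq] at hp
        apply hp
        by_cases hjne : j ≠ j'
        · simp only [gadget, if_pos hjne]
          refine bicG_univ v ?_ ?_
          · intro hmem
            simp only [Finset.mem_coe, Finset.mem_filter] at hmem
            exact hvL hmem.1.1
          · intro hmem
            simp only [Finset.mem_coe, Finset.mem_filter] at hmem
            exact hvL hmem.1
        · simp only [gadget, if_neg hjne]
          exact topG_univ v
    -- combine
    refine le_trans (ncard_sum_le _) ?_
    refine le_trans (add_le_add b1 (le_trans (ncard_sum_le _)
      (add_le_add b2 (le_trans (ncard_sum_le _) (add_le_add b3 b4))))) ?_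
    have hM' : M = 2 * s + 4 := hMdef
    omega

lemma iter_logb_le : ∀ (N : ℕ) (x : ℝ), x ≤ 2^N → ∃ n, (Real.logb 2)^[n] x ≤ 1 := by
  intro N
  induction N with
  | zero => intro x hx; exact ⟨0, by simpa using hx⟩
  | succ N ih =>
    intro x hx
    by_cases hx1 : x ≤ 1
    · exact ⟨0, by simpa using hx1⟩
    · have h2 : Real.logb 2 x ≤ (N+1 : ℝ) := by
        rw [show (N+1 : ℝ) = Real.logb 2 (2^(N+1)) by
          rw [Real.logb_pow, Real.logb_self_eq_one] <;> norm_num]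
        exact Real.logb_le_logb_of_le (by norm_num) (by linarith) hx
      have h3 : Real.logb 2 x ≤ 2^N := by
        have : (N + 1 : ℝ) ≤ 2^N := by exact_mod_cast Nat.lt_two_pow_self (n := N)
        linarith
      obtain ⟨n, hn⟩ := ih _ h3
      exact ⟨n + 1, by rwa [Function.iterate_succ_apply]⟩

lemma logStar_set_nonempty (x : ℝ) : {n : ℕ | (Real.logb 2)^[n] x ≤ 1}.Nonempty := by
  obtain ⟨N, hN⟩ := pow_unbounded_of_one_lt x (by norm_num : (1:ℝ) < 2)
  obtain ⟨n, hn⟩ := iter_logb_le N x hN.le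
  exact ⟨n, hn⟩

lemma one_edge_con {V : Type} [Fintype V] (G : SimpleGraph V)
    (hm : G.edgeSet.ncard = 1) : LocalBoxRep G 2 := by
  classical
  obtain ⟨ed, hedge⟩ := Set.ncard_eq_one.mp hm
  obtain ⟨a, b⟩ := ed
  have hab : G.Adj a b := by
    rw [← SimpleGraph.mem_edgeSet, hedge]
    rfl
  have hne : a ≠ b := G.ne_of_adj hab
  have hadj_iff : ∀ x y : V, G.Adj x y ↔ s(x, y) = s(a, b) := by
    intro x y
    rw [← SimpleGraph.mem_edgeSet, hedge, Set.mem_singleton_iff]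
  set fv : V → ℝ := fun v => ((Fintype.equivFin V v : ℕ) : ℝ) with hfv
  set nn : ℝ := (Fintype.card V : ℝ) with hnn
  have hb : ∀ v, 0 ≤ fv v ∧ fv v ≤ nn := by
    intro v
    constructor
    · positivity
    · show ((Fintype.equivFin V v : ℕ) : ℝ) ≤ (Fintype.card V : ℝ)
      exact_mod_cast le_of_lt (Fintype.equivFin V v).2
  have hfvinj : ∀ x y : V, x ≠ y → fv x ≠ fv y := by
    intro x y hxy hcon
    apply hxy
    rw [hfv] at hcon
    simp only at hcon
    have hval : (Fintype.equivFin V x : ℕ) = (Fintype.equivFin V y : ℕ) := by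
      exact_mod_cast hcon
    exact (Fintype.equivFin V).injective (Fin.ext hval)
  refine ⟨2, fun i => if i.val = 0 then pointG fv nn {x : V | x ≠ a}
    else pointG fv nn {x : V | x ≠ b}, ?_, ?_, ?_⟩
  · intro i
    dsimp only
    split <;> exact ig_isInterval _ _
  · intro u v huv
    constructor
    · intro hadj i
      have hsym : s(u, v) = s(a, b) := (hadj_iff u v).mp hadj
      rw [Sym2.eq_iff] at hsym
      dsimp only
      split
      · refine pointG_contains hb u v huv ?_
        rintro ⟨hu, hv⟩
        rcases hsym with ⟨rfl, rfl⟩ | ⟨rfl, rfl⟩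
        · exact hu rfl
        · exact hv rfl
      · refine pointG_contains hb u v huv ?_
        rintro ⟨hu, hv⟩
        rcases hsym with ⟨rfl, rfl⟩ | ⟨rfl, rfl⟩
        · exact hv rfl
        · exact hu rfl
    · intro hall
      by_contra hnadj
      have hsym : s(u, v) ≠ s(a, b) := fun h => hnadj ((hadj_iff u v).mpr h)
      by_cases hua : u = a
      · -- then v ≠ b, u = a ≠ b : use graph 1
        have hvb : v ≠ b := by
          intro hvb
          exact hsym (by rw [hua, hvb])
        have h1 := hall ⟨1, by omega⟩
        dsimp only at h1
        rw [if_neg (by norm_num)] at h1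
        exact pointG_kills u v (by rw [hua]; exact hne) hvb (hfvinj u v huv) h1
      · by_cases hva : v = a
        · have hub : u ≠ b := by
            intro hub
            exact hsym (by rw [hva, hub]; exact Sym2.eq_swap)
          have h1 := hall ⟨1, by omega⟩
          dsimp only at h1
          rw [if_neg (by norm_num)] at h1
          exact pointG_kills u v hub (by rw [hva]; exact hne) (hfvinj u v huv) h1
        · have h0 := hall ⟨0, by omega⟩
          dsimp only at h0
          rw [if_pos rfl] at h0
          exact pointG_kills u v hua hva (hfvinj u v huv) h0
  · intro v
    refine le_trans (ncard_le_finset_card (F := (Finset.univ : Finset (Fin 2)))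
      (fun x _ => Finset.mem_coe.mpr (Finset.mem_univ x))) ?_
    simp

end LBoxAux

/-- every graph with m ≥ 1 edges has
lbox(G) ≤ (2^(9·log* √m) + 2)·√m. -/
theorem stmt11 {V : Type} [Fintype V] (G : SimpleGraph V) (m : ℕ)
    (hm : G.edgeSet.ncard = m) (h1 : 1 ≤ m) :
    (lbox G : ℝ) ≤
      ((2 : ℝ) ^ (9 * logStar (Real.sqrt m)) + 2) * Real.sqrt m := by
  classical
  have hsq_nonneg : (0:ℝ) ≤ Real.sqrt m := Real.sqrt_nonneg _
  rcases eq_or_lt_of_le h1 with heq | h2m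
  · -- m = 1
    have hm1 : m = 1 := heq.symm
    subst hm1
    have hrep : LocalBoxRep G 2 := LBoxAux.one_edge_con G hm
    have hlb : lbox G ≤ 2 := Nat.sInf_le hrep
    have hsq : Real.sqrt (1 : ℕ) = 1 := by
      rw [Nat.cast_one, Real.sqrt_one]
    rw [hsq]
    have hls : logStar 1 = 0 := by
      rw [logStar]
      refine Nat.sInf_eq_zero.mpr (Or.inl ?_)
      simp
    rw [hls]
    norm_num
    exact le_trans (by exact_mod_cast hlb) (by norm_num)
  · -- m ≥ 2
    have hrep : LocalBoxRep G (11 * Nat.sqrt m + 13) := LBoxAux.main_con G m hm h2m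
    have hlb : lbox G ≤ 11 * Nat.sqrt m + 13 := Nat.sInf_le hrep
    have h1le : (1:ℝ) < Real.sqrt m := by
      have h2 : (1:ℝ) < (m:ℝ) := by exact_mod_cast h2m
      nlinarith [Real.sq_sqrt (show (0:ℝ) ≤ (m:ℝ) by positivity)]
    have hls : 1 ≤ logStar (Real.sqrt m) := by
      rw [logStar]
      rcases Nat.eq_zero_or_pos (sInf {n : ℕ | (Real.logb 2)^[n] (Real.sqrt m) ≤ 1}) with h0 | h0
      · exfalso
        rcases Nat.sInf_eq_zero.mp h0 with hmem | hemp
        · simp only [Set.mem_setOf_eq, Function.iterate_zero, id_eq] at hmem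
          linarith
        · exact absurd hemp (Set.nonempty_iff_ne_empty.mp
            (LBoxAux.logStar_set_nonempty (Real.sqrt m)))
      · exact h0
    have h512 : (512:ℝ) ≤ 2 ^ (9 * logStar (Real.sqrt m)) := by
      calc (512:ℝ) = 2^(9:ℕ) := by norm_num
        _ ≤ 2 ^ (9 * logStar (Real.sqrt m)) :=
          pow_le_pow_right₀ (by norm_num) (by omega)
    have hsle : (Nat.sqrt m : ℝ) ≤ Real.sqrt m := by
      rw [show ((Nat.sqrt m : ℕ):ℝ) = Real.sqrt ((Nat.sqrt m)^2) by
        rw [Real.sqrt_sq]; positivity]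
      apply Real.sqrt_le_sqrt
      exact_mod_cast Nat.sqrt_le' m
    calc (lbox G : ℝ) ≤ ((11 * Nat.sqrt m + 13 : ℕ) : ℝ) := by exact_mod_cast hlb
      _ = 11 * (Nat.sqrt m : ℝ) + 13 := by push_cast; ring
      _ ≤ 24 * Real.sqrt m := by nlinarith
      _ ≤ (512 + 2) * Real.sqrt m := by nlinarith
      _ ≤ ((2 : ℝ) ^ (9 * logStar (Real.sqrt m)) + 2) * Real.sqrt m := by nlinarith
end

section
/- There exists a constant c > 0 such that for infinitely many integers m there is a finite poset P of height 2 whose comparability graph G_P has m edges and satisfies lbox(G_P) ≥ c · √m / log₂ m. -/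
open Classical

/-! ### Auxiliary machinery for the proof of `stmt13` -/

open Finset in
lemma myIcc_inter_nonempty (a b c d : ℝ) :
    (Set.Icc a b ∩ Set.Icc c d).Nonempty ↔ a ⊔ c ≤ b ⊓ d := by
  rw [Set.Icc_inter_Icc, Set.nonempty_Icc]

/-- complete graph minus the edge ab -/
def cminus {V : Type} (a b : V) : SimpleGraph V where
  Adj u v := u ≠ v ∧ ¬((u = a ∧ v = b) ∨ (u = b ∧ v = a))
  symm := by constructor; intro u v h; exact ⟨h.1.symm, fun hc => h.2 (hc.elim (fun h' => .inr ⟨h'.2, h'.1⟩) (fun h' => .inl ⟨h'.2, h'.1⟩))⟩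
  loopless := by constructor; intro u h; exact h.1 rfl

lemma isIntervalGraph_top {V : Type} : IsIntervalGraph (⊤ : SimpleGraph V) := by
  refine ⟨fun _ => 0, fun _ => 1, fun u v huv => ?_⟩
  simp only [SimpleGraph.top_adj, myIcc_inter_nonempty]
  norm_num [huv]

lemma isIntervalGraph_cminus {V : Type} (a b : V) (hab : a ≠ b) :
    IsIntervalGraph (cminus a b) := by
  refine ⟨fun v => if v = a then 0 else if v = b then 2 else 0,
    fun v => if v = a then 1 else if v = b then 3 else 3, fun u v huv => ?_⟩
  rw [myIcc_inter_nonempty]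
  show (u ≠ v ∧ _) ↔ _
  by_cases hua : u = a <;> by_cases hub : u = b <;> by_cases hva : v = a <;> by_cases hvb : v = b <;>
    simp_all <;> norm_num

lemma localBoxRep_all {V : Type} [Fintype V] (G : SimpleGraph V) :
    LocalBoxRep G (Fintype.card (V × V)) := by
  set k := Fintype.card (V × V) with hk
  set e : Fin k → V × V := fun i => (Fintype.equivFin (V × V)).symm i with he
  refine ⟨k, fun i => if (e i).1 ≠ (e i).2 ∧ ¬ G.Adj (e i).1 (e i).2
      then cminus (e i).1 (e i).2 else ⊤, ?_, ?_, ?_⟩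
  · intro i
    dsimp only
    split
    · next h => exact isIntervalGraph_cminus _ _ h.1
    · exact isIntervalGraph_top
  · intro u v huv
    constructor
    · intro hadj i
      dsimp only
      split
      · next h =>
        refine ⟨huv, ?_⟩
        rintro (⟨rfl, rfl⟩ | ⟨rfl, rfl⟩)
        · exact h.2 hadj
        · exact h.2 hadj.symm
      · exact huv
    · intro h
      by_contra hadj
      have := h ((Fintype.equivFin (V × V)) (u, v))
      dsimp only at this
      rw [show e ((Fintype.equivFin (V × V)) (u, v)) = (u, v) from (Fintype.equivFin (V × V)).symm_apply_apply _] at this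
      simp only [huv, hadj, not_false_iff, ne_eq, and_self, if_pos, true_and] at this
      rcases this with ⟨_, h2⟩
      exact h2 (.inl ⟨rfl, rfl⟩)
  · intro v
    calc {i : Fin k | ¬ IsUniversal _ v}.ncard ≤ (Set.univ : Set (Fin k)).ncard :=
          Set.ncard_le_ncard (Set.subset_univ _) Set.finite_univ
    _ = k := by rw [Set.ncard_univ, Nat.card_eq_fintype_card, Fintype.card_fin]

lemma localBoxRep_mono {V : Type} (G : SimpleGraph V) {t t' : ℕ}
    (h : LocalBoxRep G t) (htt : t ≤ t') : LocalBoxRep G t' := by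
  obtain ⟨k, I, h1, h2, h3⟩ := h
  exact ⟨k, I, h1, h2, fun v => le_trans (h3 v) htt⟩

lemma lbox_gt {V : Type} [Fintype V] (G : SimpleGraph V) (t : ℕ)
    (h : ¬ LocalBoxRep G t) : t < lbox G := by
  have hne : {s : ℕ | LocalBoxRep G s}.Nonempty := ⟨_, localBoxRep_all G⟩
  have hmem := Nat.sInf_mem hne
  by_contra hc
  push_neg at hc
  exact h (localBoxRep_mono G hmem hc)

open Finset in
lemma discretize {V : Type} [Fintype V] (I : SimpleGraph V) (hI : IsIntervalGraph I)
    (M : ℕ) (hM : 2 * Fintype.card V ≤ M) :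
    ∃ l' r' : V → Fin M, ∀ u v : V, u ≠ v →
      (I.Adj u v ↔ (l' u ⊔ l' v ≤ r' u ⊓ r' v)) := by
  classical
  obtain ⟨l, r, hlr⟩ := hI
  set F : Finset ℝ := (Finset.univ.image l) ∪ (Finset.univ.image r) with hF
  have hFcard : F.card ≤ 2 * Fintype.card V := by
    calc F.card ≤ (Finset.univ.image l).card + (Finset.univ.image r).card :=
          Finset.card_union_le _ _
    _ ≤ Fintype.card V + Fintype.card V := by
        gcongr <;> exact Finset.card_image_le.trans_eq Finset.card_univ
    _ = 2 * Fintype.card V := by ring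
  set rank : ℝ → ℕ := fun x => (F.filter (· < x)).card with hrank
  have hlt : ∀ x ∈ F, rank x < M := by
    intro x hx
    have h1 : F.filter (· < x) ⊆ F.erase x := by
      intro z hz
      simp only [Finset.mem_filter] at hz
      exact Finset.mem_erase.2 ⟨ne_of_lt hz.2, hz.1⟩
    have h2 : (F.erase x).card < F.card := Finset.card_erase_lt_of_mem hx
    have := Finset.card_le_card h1
    have hrx : rank x = (F.filter (· < x)).card := rfl
    omega
  have hmono : ∀ x ∈ F, ∀ y ∈ F, (x ≤ y ↔ rank x ≤ rank y) := by
    intro x hx y hy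
    constructor
    · intro hxy
      apply Finset.card_le_card
      intro z hz
      simp only [Finset.mem_filter] at hz ⊢
      exact ⟨hz.1, lt_of_lt_of_le hz.2 hxy⟩
    · intro hr
      by_contra hxy
      push_neg at hxy
      have hss : F.filter (· < y) ⊂ F.filter (· < x) := by
        refine Finset.ssubset_iff_of_subset (fun z hz => ?_) |>.2 ?_
        · simp only [Finset.mem_filter] at hz ⊢
          exact ⟨hz.1, lt_trans hz.2 hxy⟩
        · exact ⟨y, by simp [hy, hxy], by simp⟩
      have := Finset.card_lt_card hss
      have hrx : rank x = (F.filter (· < x)).card := rfl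
      have hry : rank y = (F.filter (· < y)).card := rfl
      omega
  have hlF : ∀ v, l v ∈ F := fun v => Finset.mem_union_left _ (Finset.mem_image_of_mem _ (mem_univ v))
  have hrF : ∀ v, r v ∈ F := fun v => Finset.mem_union_right _ (Finset.mem_image_of_mem _ (mem_univ v))
  refine ⟨fun v => ⟨rank (l v), hlt _ (hlF v)⟩, fun v => ⟨rank (r v), hlt _ (hrF v)⟩,
    fun u v huv => ?_⟩
  rw [hlr u v huv, myIcc_inter_nonempty]
  simp only [sup_le_iff, le_inf_iff, Fin.mk_le_mk]
  exact and_congr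
    (and_congr (hmono _ (hlF u) _ (hrF u)) (hmono _ (hlF v) _ (hrF u)))
    (and_congr (hmono _ (hlF u) _ (hrF v)) (hmono _ (hlF v) _ (hrF v)))

/-- The bipartite height-2 order on `Fin n ⊕ Fin n` induced by a relation `H`. -/
def bpOrd (n : ℕ) (H : Finset (Fin n × Fin n)) : PartialOrder (Fin n ⊕ Fin n) where
  le a b := a = b ∨ ∃ x y, a = Sum.inl x ∧ b = Sum.inr y ∧ (x, y) ∈ H
  lt a b := (a = b ∨ ∃ x y, a = Sum.inl x ∧ b = Sum.inr y ∧ (x, y) ∈ H) ∧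
    ¬ (b = a ∨ ∃ x y, b = Sum.inl x ∧ a = Sum.inr y ∧ (x, y) ∈ H)
  lt_iff_le_not_ge a b := Iff.rfl
  le_refl a := Or.inl rfl
  le_trans a b c hab hbc := by
    rcases hab with rfl | ⟨x, y, rfl, rfl, hxy⟩
    · exact hbc
    · rcases hbc with rfl | ⟨x', y', h1, _, _⟩
      · exact Or.inr ⟨x, y, rfl, rfl, hxy⟩
      · exact absurd h1 (by simp)
  le_antisymm a b hab hba := by
    rcases hab with rfl | ⟨x, y, rfl, rfl, hxy⟩
    · rfl
    · rcases hba with h | ⟨x', y', h1, _, _⟩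
      · exact h.symm
      · exact absurd h1 (by simp)

lemma bp_height (n : ℕ) (H : Finset (Fin n × Fin n)) :
    @HeightAtMostTwo (Fin n ⊕ Fin n) (bpOrd n H).toPreorder := by
  intro a b c hab hbc
  rcases hab with rfl | ⟨x, y, rfl, rfl, hxy⟩
  · exact Or.inl rfl
  · rcases hbc with rfl | ⟨x', y', h1, _, _⟩
    · exact Or.inr rfl
    · exact absurd h1 (by simp)

lemma bp_adj (n : ℕ) (H : Finset (Fin n × Fin n)) (x y : Fin n) :
    (@compGraph _ (bpOrd n H)).Adj (Sum.inl x) (Sum.inr y) ↔ (x, y) ∈ H := by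
  constructor
  · rintro ⟨hne, h | h⟩
    · rcases h with h | ⟨x', y', h1, h2, h3⟩
      · simp at h
      · rw [Sum.inl.injEq] at h1; rw [Sum.inr.injEq] at h2
        subst h1; subst h2; exact h3
    · rcases h with h | ⟨x', y', h1, h2, h3⟩
      · simp at h
      · simp at h1
  · intro h
    exact ⟨by simp, Or.inl (Or.inr ⟨x, y, rfl, rfl, h⟩)⟩

lemma bp_edgeSet (n : ℕ) (H : Finset (Fin n × Fin n)) :
    (@compGraph _ (bpOrd n H)).edgeSet
      = (fun p : Fin n × Fin n => s(Sum.inl p.1, Sum.inr p.2)) '' ↑H := by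
  ext e
  induction e with
  | _ a b =>
    simp only [SimpleGraph.mem_edgeSet, Set.mem_image]
    constructor
    · rintro ⟨hne, hc⟩
      have key : ∀ (a b : Fin n ⊕ Fin n), @LE.le _ (bpOrd n H).toLE a b → a ≠ b →
          ∃ x y, a = Sum.inl x ∧ b = Sum.inr y ∧ (x, y) ∈ H := by
        rintro a b (rfl | ⟨x, y, rfl, rfl, hxy⟩) hne
        · exact absurd rfl hne
        · exact ⟨x, y, rfl, rfl, hxy⟩
      rcases hc with h | h
      · obtain ⟨x, y, rfl, rfl, hxy⟩ := key a b h hne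
        exact ⟨(x, y), hxy, rfl⟩
      · obtain ⟨x, y, rfl, rfl, hxy⟩ := key b a h (Ne.symm hne)
        exact ⟨(x, y), hxy, Sym2.eq_swap⟩
    · rintro ⟨⟨x, y⟩, hxy, he⟩
      have h1 := (bp_adj n H x y).2 hxy
      show (@compGraph _ (bpOrd n H)).Adj a b
      rw [← SimpleGraph.mem_edgeSet, ← he, SimpleGraph.mem_edgeSet]
      exact h1

lemma bp_edge_count (n : ℕ) (H : Finset (Fin n × Fin n)) :
    (@compGraph _ (bpOrd n H)).edgeSet.ncard = H.card := by
  rw [bp_edgeSet]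
  rw [Set.ncard_image_of_injective _ ?_, Set.ncard_coe_finset]
  intro p q hpq
  rcases Sym2.eq_iff.1 hpq with ⟨h1, h2⟩ | ⟨h1, h2⟩
  · exact Prod.ext (Sum.inl_injective h1) (Sum.inr_injective h2)
  · exact absurd h1 (by simp)

/-- Encoding type for local box representations. -/
abbrev Enc (n t : ℕ) : Type :=
  (Fin n ⊕ Fin n) → Fin t → Option (Fin (2*n*t) × Fin (4*n) × Fin (4*n))

def NonAdjDec {n t : ℕ} (g : Enc n t) (u v : Fin n ⊕ Fin n) : Prop :=
  ∃ (j j' : Fin t), ∃ p q, g u j = some p ∧ g v j' = some q ∧ p.1 = q.1 ∧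
    ¬ (p.2.1 ⊔ q.2.1 ≤ p.2.2 ⊓ q.2.2)

open Finset in
lemma exists_encoding (n t : ℕ) (H : Finset (Fin n × Fin n))
    (h : LocalBoxRep (@compGraph _ (bpOrd n H)) t) :
    ∃ g : Enc n t, ∀ x y : Fin n,
      ((x, y) ∈ H ↔ ¬ NonAdjDec g (Sum.inl x) (Sum.inr y)) := by
  classical
  obtain ⟨k, I, hIg, hadj, hcnt⟩ := h
  have hcard : Fintype.card (Fin n ⊕ Fin n) = n + n := by simp
  choose l r hD using fun i => discretize (I i) (hIg i) (4*n) (by rw [hcard]; omega)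
  set F : (Fin n ⊕ Fin n) → Finset (Fin k) :=
    fun v => univ.filter (fun i => ¬ IsUniversal (I i) v) with hF
  have hFt : ∀ v, (F v).card ≤ t := by
    intro v
    have hset : {i : Fin k | ¬ IsUniversal (I i) v} = ↑(F v) := by
      ext i; simp [hF]
    have := hcnt v
    rwa [hset, Set.ncard_coe_finset] at this
  set U : Fin k → Finset (Fin n ⊕ Fin n) :=
    fun i => univ.filter (fun v => ¬ IsUniversal (I i) v) with hU
  set T : Finset (Fin k) := univ.filter (fun i => (U i).Nonempty) with hT
  have hsum : ∑ i : Fin k, (U i).card = ∑ v : Fin n ⊕ Fin n, (F v).card := by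
    simp only [hU, hF, Finset.card_filter]
    exact Finset.sum_comm
  have hTcard : T.card ≤ 2*n*t := by
    have h1 : T.card ≤ ∑ i ∈ T, (U i).card := by
      rw [Finset.card_eq_sum_ones]
      exact Finset.sum_le_sum (fun i hi => by
        rcases (Finset.mem_filter.1 hi).2 with ⟨v, hv⟩
        exact Finset.card_pos.2 ⟨v, hv⟩)
    have h2 : ∑ i ∈ T, (U i).card ≤ ∑ i : Fin k, (U i).card :=
      Finset.sum_le_sum_of_subset (Finset.subset_univ T)
    have h3 : ∑ v : Fin n ⊕ Fin n, (F v).card ≤ ∑ _v : Fin n ⊕ Fin n, t :=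
      Finset.sum_le_sum (fun v _ => hFt v)
    have h4 : ∑ _v : Fin n ⊕ Fin n, t = (n+n)*t := by
      rw [Finset.sum_const, Finset.card_univ, hcard, smul_eq_mul]
    have h5 : (n+n)*t = 2*n*t := by ring
    omega
  have hmemT : ∀ (v : Fin n ⊕ Fin n) (i : Fin k), i ∈ F v → i ∈ T := by
    intro v i hi
    simp only [hT, Finset.mem_filter, Finset.mem_univ, true_and]
    exact ⟨v, by simpa [hU] using (Finset.mem_filter.1 hi).2⟩
  set embT : {i // i ∈ T} → Fin (2*n*t) :=
    fun i => Fin.castLE hTcard (T.equivFin i) with hembT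
  have hembInj : ∀ i i' : {i // i ∈ T}, embT i = embT i' → i = i' := by
    intro i i' hii
    simp only [hembT] at hii
    exact T.equivFin.injective (Fin.castLE_injective _ hii)
  set g : Enc n t := fun v j =>
    if hj : (j : ℕ) < (F v).card then
      some (embT ⟨((F v).equivFin.symm ⟨(j : ℕ), hj⟩ : {x // x ∈ F v}).1,
              hmemT v _ ((F v).equivFin.symm ⟨(j : ℕ), hj⟩).2⟩,
            l (((F v).equivFin.symm ⟨(j : ℕ), hj⟩ : {x // x ∈ F v}).1) v,
            r (((F v).equivFin.symm ⟨(j : ℕ), hj⟩ : {x // x ∈ F v}).1) v)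
    else none with hg
  have hb : ∀ (v : Fin n ⊕ Fin n) (j : Fin t) p, g v j = some p →
      ∃ (i : Fin k) (hi : i ∈ F v),
        p = (embT ⟨i, hmemT v i hi⟩, l i v, r i v) := by
    intro v j p hp
    simp only [hg] at hp
    split at hp
    · next hj =>
      refine ⟨_, ((F v).equivFin.symm ⟨(j : ℕ), hj⟩).2, ?_⟩
      exact (Option.some_injective _ hp).symm
    · exact absurd hp (by simp)
  have ha : ∀ (v : Fin n ⊕ Fin n) (i : Fin k) (hi : i ∈ F v),
      ∃ j : Fin t, g v j = some (embT ⟨i, hmemT v i hi⟩, l i v, r i v) := by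
    intro v i hi
    have hjlt : ((F v).equivFin ⟨i, hi⟩ : ℕ) < t :=
      lt_of_lt_of_le ((F v).equivFin ⟨i, hi⟩).2 (hFt v)
    refine ⟨⟨(F v).equivFin ⟨i, hi⟩, hjlt⟩, ?_⟩
    have hj : (((F v).equivFin ⟨i, hi⟩ : ℕ)) < (F v).card := ((F v).equivFin ⟨i, hi⟩).2
    simp only [hg]
    rw [dif_pos hj]
    have he : ((F v).equivFin.symm ⟨((F v).equivFin ⟨i, hi⟩ : ℕ), hj⟩ : {x // x ∈ F v})
        = ⟨i, hi⟩ := by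
      have : (⟨((F v).equivFin ⟨i, hi⟩ : ℕ), hj⟩ : Fin (F v).card)
          = (F v).equivFin ⟨i, hi⟩ := Fin.ext rfl
      rw [this, Equiv.symm_apply_apply]
    rw [he]
  have hd : ∀ (i : Fin k) (u v : Fin n ⊕ Fin n), u ≠ v → ¬ (I i).Adj u v →
      i ∈ F u ∧ i ∈ F v := by
    intro i u v huv hni
    constructor
    · simp only [hF, Finset.mem_filter, Finset.mem_univ, true_and]
      intro hU'; exact hni (hU' v (Ne.symm huv))
    · simp only [hF, Finset.mem_filter, Finset.mem_univ, true_and]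
      intro hU'; exact hni ((hU' u huv).symm)
  refine ⟨g, fun x y => ?_⟩
  have hxy : (Sum.inl x : Fin n ⊕ Fin n) ≠ Sum.inr y := by simp
  rw [← bp_adj n H x y, hadj _ _ hxy]
  set u : Fin n ⊕ Fin n := Sum.inl x
  set v : Fin n ⊕ Fin n := Sum.inr y
  refine ⟨fun hall hna => ?_, fun hna i => ?_⟩
  · obtain ⟨j, j', p, q, hpj, hqj, hpq1, hpq2⟩ := hna
    obtain ⟨i, hi, rfl⟩ := hb u j p hpj
    obtain ⟨i', hi', rfl⟩ := hb v j' q hqj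
    have : i = i' := by
      have := hembInj _ _ hpq1
      exact congrArg Subtype.val this
    subst this
    exact hpq2 ((hD i u v hxy).1 (hall i))
  · by_contra hni
    obtain ⟨hiu, hiv⟩ := hd i u v hxy hni
    obtain ⟨j, hj⟩ := ha u i hiu
    obtain ⟨j', hj'⟩ := ha v i hiv
    exact hna ⟨j, j', _, _, hj, hj', rfl, fun hc => hni ((hD i u v hxy).2 hc)⟩

open Finset in
noncomputable def BadSet (n t : ℕ) : Finset (Finset (Fin n × Fin n)) :=
  @Finset.filter _ (fun H => LocalBoxRep (@compGraph _ (bpOrd n H)) t) (Classical.decPred _)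
    (powersetCard (n*n/2) (univ : Finset (Fin n × Fin n)))

lemma card_Enc (n t : ℕ) :
    Fintype.card (Enc n t) = ((2*n*t*((4*n)*(4*n))+1)^t)^(n+n) := by
  rw [Fintype.card_fun, Fintype.card_fun]
  simp [mul_assoc]

open Finset in
lemma card_bad_le (n t : ℕ) :
    (BadSet n t).card ≤ ((2*n*t*((4*n)*(4*n))+1)^t)^(n+n) := by
  classical
  rw [← card_Enc n t, ← Finset.card_univ]
  refine Finset.card_le_card_of_injOn
    (fun H => if h : LocalBoxRep (@compGraph _ (bpOrd n H)) t
      then (exists_encoding n t H h).choose else (fun _ _ => none))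
    (fun _ _ => Finset.mem_univ _) ?_
  intro H1 h1 H2 h2 heq
  simp only [Finset.mem_coe, BadSet, Finset.mem_filter] at h1 h2
  dsimp only at heq
  rw [dif_pos h1.2, dif_pos h2.2] at heq
  have s1 := (exists_encoding n t H1 h1.2).choose_spec
  have s2 := (exists_encoding n t H2 h2.2).choose_spec
  ext ⟨x, y⟩
  rw [s1 x y, s2 x y, heq]

open Finset in
lemma exists_good (n t : ℕ)
    (hlt : ((2*n*t*((4*n)*(4*n))+1)^t)^(n+n) < (n*n).choose (n*n/2)) :
    ∃ H ∈ powersetCard (n*n/2) (univ : Finset (Fin n × Fin n)),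
      ¬ LocalBoxRep (@compGraph _ (bpOrd n H)) t := by
  classical
  by_contra hall
  push_neg at hall
  have heq : BadSet n t = powersetCard (n*n/2) (univ : Finset (Fin n × Fin n)) := by
    apply Finset.filter_true_of_mem
    intro H hH
    exact hall H hH
  have hcard : (BadSet n t).card = (n*n).choose (n*n/2) := by
    rw [heq, Finset.card_powersetCard]
    congr 1
    simp [Finset.card_univ]
  have := card_bad_le n t
  omega

open Finset in
lemma choose_big (N : ℕ) : 2^N ≤ (N+1) * N.choose (N/2) := by
  calc 2^N = ∑ i ∈ range (N+1), N.choose i := (Nat.sum_range_choose N).symm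
  _ ≤ ∑ _i ∈ range (N+1), N.choose (N/2) :=
      Finset.sum_le_sum (fun i _ => Nat.choose_le_middle i N)
  _ = (N+1) * N.choose (N/2) := by rw [Finset.sum_const, Finset.card_range, smul_eq_mul]

lemma arith' (n L t : ℕ) (hn : 2^20 ≤ n) (hn2L : n < 2^L) (hL1 : 1 ≤ L) (hLn : L ≤ n)
    (htn : t ≤ n) (hLt : L * t ≤ n / 100) :
    (n*n+1) * ((2*n*t*((4*n)*(4*n))+1)^t)^(n+n) < 2^(n*n) := by
  have hn0 : 0 < n := by omega
  have h20 : 20 * (n / 100) ≤ n / 5 := by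
    rw [Nat.le_div_iff_mul_le (by norm_num)]
    calc 20 * (n / 100) * 5 = (n / 100) * 100 := by ring
    _ ≤ n := Nat.div_mul_le_self _ _
  have hbase : 2*n*t*((4*n)*(4*n))+1 ≤ 2^(10*L) := by
    have hp4 : 0 < n^4 := by positivity
    calc 2*n*t*((4*n)*(4*n))+1 ≤ 2*n*n*((4*n)*(4*n))+1 := by
          have := Nat.mul_le_mul_right ((4*n)*(4*n)) (Nat.mul_le_mul_left (2*n) htn)
          omega
    _ = 32*n^4+1 := by ring
    _ ≤ 64*n^4 := by omega
    _ ≤ 2^6 * (2^L)^4 := by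
        have : n^4 ≤ (2^L)^4 := Nat.pow_le_pow_left (le_of_lt hn2L) 4
        omega
    _ = 2^(6+L*4) := by rw [← pow_mul, ← pow_add]
    _ ≤ 2^(10*L) := Nat.pow_le_pow_right (by norm_num) (by omega)
  have hnn1 : n*n+1 ≤ 2^(2*L) := by
    calc n*n+1 ≤ (n+1)*(n+1) := by nlinarith
    _ ≤ 2^L * 2^L := Nat.mul_le_mul (by omega) (by omega)
    _ = 2^(L+L) := by rw [← pow_add]
    _ = 2^(2*L) := by ring_nf
  have hmain : ((2*n*t*((4*n)*(4*n))+1)^t)^(n+n) ≤ 2^(10*L*(t*(n+n))) := by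
    rw [← pow_mul]
    calc (2*n*t*((4*n)*(4*n))+1)^(t*(n+n)) ≤ (2^(10*L))^(t*(n+n)) :=
          Nat.pow_le_pow_left hbase _
    _ = 2^(10*L*(t*(n+n))) := by rw [← pow_mul]
  have hexp : 2*L + 10*L*(t*(n+n)) < n*n := by
    have he1 : 10*L*(t*(n+n)) = 20*(L*t)*n := by ring
    have he2 : 20*(L*t)*n ≤ 20*(n/100)*n :=
      Nat.mul_le_mul_right n (by omega)
    have he3 : 20*(n/100)*n ≤ (n/5)*n := Nat.mul_le_mul_right n h20
    have hq : 5 * (n/5) ≤ n := by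
      have := Nat.div_mul_le_self n 5
      omega
    have hq2 : n/5 + 3 ≤ n := by omega
    have he4 : (n/5)*n + 3*n ≤ n*n := by
      calc (n/5)*n + 3*n = (n/5 + 3)*n := by ring
      _ ≤ n*n := Nat.mul_le_mul_right n hq2
    omega
  calc (n*n+1) * ((2*n*t*((4*n)*(4*n))+1)^t)^(n+n)
      ≤ 2^(2*L) * 2^(10*L*(t*(n+n))) := Nat.mul_le_mul hnn1 hmain
  _ = 2^(2*L + 10*L*(t*(n+n))) := by rw [← pow_add]
  _ < 2^(n*n) := Nat.pow_lt_pow_right (by norm_num) hexp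

/-- ∃ c > 0 such that for infinitely many m there is a finite
height-2 poset whose comparability graph has m edges and local boxicity at
least c·√m/log₂ m. -/
theorem stmt13 : ∃ c : ℝ, 0 < c ∧ ∀ N : ℕ, ∃ m : ℕ, N ≤ m ∧
    ∃ (α : Type) (_ : Fintype α) (instp : PartialOrder α),
      @HeightAtMostTwo α instp.toPreorder ∧
      (@compGraph α instp).edgeSet.ncard = m ∧
      c * Real.sqrt (m : ℝ) / Real.logb 2 (m : ℝ) ≤
        (lbox (@compGraph α instp) : ℝ) := by
  classical
  refine ⟨1/200, by norm_num, fun N => ?_⟩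
  set n : ℕ := max N (2^20) with hn
  have hn20 : 2^20 ≤ n := le_max_right _ _
  have hnN : N ≤ n := le_max_left _ _
  have hn0 : 0 < n := by omega
  have hn2 : 2 ≤ n := by omega
  set L : ℕ := Nat.log 2 n + 1 with hL
  set t : ℕ := n / (100 * L) with ht
  have hn2L : n < 2^L := Nat.lt_pow_succ_log_self (by norm_num) n
  have hL1 : 1 ≤ L := by omega
  have hLn : L ≤ n := by
    have := Nat.log_lt_self 2 (by omega : n ≠ 0)
    omega
  have htn : t ≤ n := Nat.div_le_self _ _
  have hLt : L * t ≤ n / 100 := by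
    rw [Nat.le_div_iff_mul_le (by norm_num)]
    calc L * t * 100 = t * (100 * L) := by ring
    _ ≤ n := Nat.div_mul_le_self _ _
  set m : ℕ := n*n/2 with hm
  have hnm : n ≤ m := by
    have h1 : 2*n ≤ n*n := Nat.mul_le_mul_right n hn2
    have := Nat.div_le_div_right (c := 2) h1
    simpa using this
  have hmnn : m ≤ n*n := Nat.div_le_self _ _
  -- the counting argument
  have hlt : ((2*n*t*((4*n)*(4*n))+1)^t)^(n+n) < (n*n).choose (n*n/2) := by
    have h1 := arith' n L t hn20 hn2L hL1 hLn htn hLt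
    have h2 := choose_big (n*n)
    have h3 : (n*n+1) * ((2*n*t*((4*n)*(4*n))+1)^t)^(n+n)
        < (n*n+1) * (n*n).choose (n*n/2) := lt_of_lt_of_le h1 h2
    exact Nat.lt_of_mul_lt_mul_left h3
  obtain ⟨H, hHmem, hHbad⟩ := exists_good n t hlt
  obtain ⟨-, hHcard⟩ := Finset.mem_powersetCard.1 hHmem
  refine ⟨m, le_trans hnN hnm, Fin n ⊕ Fin n, inferInstance, bpOrd n H,
    bp_height n H, by rw [bp_edge_count n H, hHcard], ?_⟩
  -- the local boxicity lower bound
  have hlb : t < lbox (@compGraph _ (bpOrd n H)) := lbox_gt _ t hHbad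
  have hlbR : (t : ℝ) + 1 ≤ (lbox (@compGraph _ (bpOrd n H)) : ℝ) := by
    exact_mod_cast Nat.succ_le_of_lt hlb
  -- real estimates
  have hlogn_pos : (0:ℝ) < Real.logb 2 n :=
    Real.logb_pos (by norm_num) (by exact_mod_cast (by omega : 1 < n))
  have hlogL : (L : ℝ) ≤ 2 * Real.logb 2 n := by
    have hlog1 : (Nat.log 2 n : ℝ) ≤ Real.logb 2 n := by
      have hp : (2:ℝ)^(Nat.log 2 n) ≤ n := by
        exact_mod_cast Nat.pow_log_le_self 2 (by omega)
      calc (Nat.log 2 n : ℝ) = Real.logb 2 ((2:ℝ)^(Nat.log 2 n)) := by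
            rw [Real.logb_pow, Real.logb_self_eq_one (by norm_num)]
            ring
      _ ≤ Real.logb 2 n := Real.logb_le_logb_of_le (by norm_num) (by positivity) hp
    have h1 : (1:ℝ) ≤ Real.logb 2 n := by
      calc (1:ℝ) = Real.logb 2 2 := (Real.logb_self_eq_one (by norm_num)).symm
      _ ≤ Real.logb 2 n := Real.logb_le_logb_of_le (by norm_num) (by norm_num)
            (by exact_mod_cast hn2)
    have : (L : ℝ) = (Nat.log 2 n : ℝ) + 1 := by exact_mod_cast rfl
    linarith
  have htL : (n : ℝ) / (200 * Real.logb 2 n) ≤ (t : ℝ) + 1 := by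
    have h1 : (n : ℝ) < ((t:ℝ)+1) * (100*L) := by
      have : n < (t+1)*(100*L) := (Nat.div_lt_iff_lt_mul (by omega)).1 (Nat.lt_succ_self t)
      exact_mod_cast this
    have h2 : (n : ℝ) / (200 * Real.logb 2 n) ≤ (n : ℝ) / (100 * L) := by
      apply div_le_div_of_nonneg_left (by positivity) (by positivity)
      linarith [hlogL]
    have h3 : (n : ℝ) / (100 * L) ≤ (t : ℝ) + 1 := by
      rw [div_le_iff₀ (by positivity)]
      nlinarith [h1]
    linarith
  have hsq : Real.sqrt m ≤ n := by
    have h1 : (m:ℝ) ≤ (n:ℝ)*(n:ℝ) := by exact_mod_cast hmnn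
    calc Real.sqrt m ≤ Real.sqrt ((n:ℝ)*(n:ℝ)) := Real.sqrt_le_sqrt h1
    _ = n := Real.sqrt_mul_self (by positivity)
  have hlogm : Real.logb 2 n ≤ Real.logb 2 m :=
    Real.logb_le_logb_of_le (by norm_num) (by positivity) (by exact_mod_cast hnm)
  have hfinal : (1/200:ℝ) * Real.sqrt m / Real.logb 2 m ≤ (n : ℝ) / (200 * Real.logb 2 n) := by
    have h1 : (1/200:ℝ) * Real.sqrt m / Real.logb 2 m ≤ (1/200:ℝ) * n / Real.logb 2 n := by
      apply div_le_div₀ (by positivity) ?_ hlogn_pos hlogm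
      nlinarith [hsq]
    have h2 : (1/200:ℝ) * n / Real.logb 2 n = (n : ℝ) / (200 * Real.logb 2 n) := by
      field_simp
    linarith
  calc (1/200:ℝ) * Real.sqrt m / Real.logb 2 m
      ≤ (n : ℝ) / (200 * Real.logb 2 n) := hfinal
  _ ≤ (t : ℝ) + 1 := htL
  _ ≤ _ := hlbR
end

section
/- For every finite simple graph G, lbox(G) ≤ prod_dim(G). -/
open Classical

-- my aux
def splitGraph {V : Type} (P : V → Prop) : SimpleGraph V where
  Adj u v := u ≠ v ∧ ¬(P u ∧ P v)
  symm := by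
    constructor
    rintro u v ⟨h1, h2⟩
    exact ⟨h1.symm, fun h => h2 ⟨h.2, h.1⟩⟩
  loopless := ⟨fun v h => h.1 rfl⟩

lemma splitGraph_adj {V : Type} (P : V → Prop) (u v : V) :
    (splitGraph P).Adj u v ↔ u ≠ v ∧ ¬(P u ∧ P v) := Iff.rfl

lemma splitGraph_interval {V : Type} [Fintype V] (P : V → Prop) :
    IsIntervalGraph (splitGraph P) := by
  classical
  set n := Fintype.card V with hn
  set c : V → ℝ := fun w => ((Fintype.equivFin V w : ℕ) : ℝ) with hc
  have hc_lt : ∀ w, c w < n := by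
    intro w
    have := (Fintype.equivFin V w).isLt
    simp only [hc, hn]
    exact_mod_cast this
  have hc_nonneg : ∀ w, (0:ℝ) ≤ c w := fun w => Nat.cast_nonneg _
  have hc_inj : Function.Injective c := by
    intro u v h
    have : ((Fintype.equivFin V u : ℕ) : ℝ) = ((Fintype.equivFin V v : ℕ) : ℝ) := h
    have : (Fintype.equivFin V u : ℕ) = (Fintype.equivFin V v : ℕ) := by exact_mod_cast this
    exact (Fintype.equivFin V).injective (Fin.ext this)
  refine ⟨fun w => if P w then c w else -1, fun w => if P w then c w else n, ?_⟩
  intro u v huv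
  rw [splitGraph_adj]
  by_cases hu : P u <;> by_cases hv : P v
  · simp only [if_pos hu, if_pos hv]
    constructor
    · rintro ⟨-, h⟩; exact absurd ⟨hu, hv⟩ h
    · rintro ⟨x, hx1, hx2⟩
      rw [Set.Icc_self] at hx1 hx2
      exact absurd (hc_inj (hx1.symm.trans hx2)) huv
  · simp only [if_pos hu, if_neg hv]
    refine iff_of_true ⟨huv, fun h => hv h.2⟩ ⟨c u, by simp, ?_⟩
    exact ⟨le_trans (by norm_num) (hc_nonneg u), (hc_lt u).le⟩
  · simp only [if_neg hu, if_pos hv]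
    refine iff_of_true ⟨huv, fun h => hu h.1⟩ ⟨c v, ?_, by simp⟩
    exact ⟨le_trans (by norm_num) (hc_nonneg v), (hc_lt v).le⟩
  · simp only [if_neg hu, if_neg hv]
    refine iff_of_true ⟨huv, fun h => hu h.1⟩ ⟨0, ?_, ?_⟩ <;>
      exact ⟨by norm_num, by positivity⟩



lemma localBoxRep_of_prodRep {V : Type} [Fintype V] (G : SimpleGraph V) (k : ℕ)
    (f : V → Fin k → ℕ)
    (hf : ∀ u v : V, u ≠ v → (G.Adj u v ↔ ∀ i, f u i ≠ f v i)) :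
    LocalBoxRep G k := by
  classical
  set M : ℕ := Finset.univ.sup (fun p : V × Fin k => f p.1 p.2) + 1 with hM
  have hbound : ∀ (v : V) (i : Fin k), f v i < M := by
    intro v i
    have : f v i ≤ Finset.univ.sup (fun p : V × Fin k => f p.1 p.2) :=
      Finset.le_sup (f := fun p : V × Fin k => f p.1 p.2) (Finset.mem_univ (v, i))
    omega
  set H : Fin k × Fin M → SimpleGraph V :=
    fun p => splitGraph (fun w => f w p.1 = (p.2 : ℕ)) with hH
  set e : Fin k × Fin M ≃ Fin (k * M) := finProdFinEquiv with he
  refine ⟨k * M, fun j => H (e.symm j), fun j => splitGraph_interval _, ?_, ?_⟩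
  · intro u v huv
    constructor
    · intro hadj j
      refine ⟨huv, ?_⟩
      rintro ⟨h1, h2⟩
      exact (hf u v huv).1 hadj (e.symm j).1 (h1.trans h2.symm)
    · intro hall
      refine (hf u v huv).2 (fun i hi => ?_)
      have := hall (e (i, ⟨f u i, hbound u i⟩))
      simp only [Equiv.symm_apply_apply] at this
      exact this.2 ⟨rfl, hi.symm⟩
  · intro v
    have hsub : {j : Fin (k * M) | ¬ IsUniversal (H (e.symm j)) v} ⊆
        (fun i : Fin k => e (i, ⟨f v i, hbound v i⟩)) '' Set.univ := by
      intro j hj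
      have hval : ((e.symm j).2 : ℕ) = f v (e.symm j).1 := by
        by_contra hne
        exact hj (fun u hu => ⟨fun h => hu h.symm, fun h => hne h.1.symm⟩)
      refine ⟨(e.symm j).1, Set.mem_univ _, ?_⟩
      have : ((e.symm j).1, (⟨f v (e.symm j).1, hbound v _⟩ : Fin M)) = e.symm j := by
        refine Prod.ext rfl (Fin.ext ?_)
        exact hval.symm
      show e ((e.symm j).1, ⟨f v (e.symm j).1, hbound v _⟩) = j
      rw [this, Equiv.apply_symm_apply]
    calc {j : Fin (k * M) | ¬ IsUniversal (H (e.symm j)) v}.ncard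
        ≤ ((fun i : Fin k => e (i, ⟨f v i, hbound v i⟩)) '' Set.univ).ncard :=
          Set.ncard_le_ncard hsub (Set.toFinite _)
      _ ≤ (Set.univ : Set (Fin k)).ncard := Set.ncard_image_le (Set.toFinite _)
      _ = k := by rw [Set.ncard_univ]; simp

lemma exists_prodRep {V : Type} [Fintype V] (G : SimpleGraph V) :
    ∃ k : ℕ, 0 < k ∧ ∃ f : V → Fin k → ℕ,
      ∀ u v : V, u ≠ v → (G.Adj u v ↔ ∀ i, f u i ≠ f v i) := by
  classical
  set n : ℕ := Fintype.card V with hn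
  set c : V → ℕ := fun w => (Fintype.equivFin V w : ℕ) with hc
  have hc_lt : ∀ w, c w < n := fun w => (Fintype.equivFin V w).isLt
  have hc_inj : Function.Injective c := fun u v h =>
    (Fintype.equivFin V).injective (Fin.ext h)
  set ι : Type := (V × V) ⊕ Unit with hι
  set f0 : V → ι → ℕ := fun w i =>
    match i with
    | Sum.inr _ => c w
    | Sum.inl (a, b) => if a ≠ b ∧ ¬ G.Adj a b ∧ (w = a ∨ w = b) then n else c w
    with hf0
  have key : ∀ u v : V, u ≠ v → (G.Adj u v ↔ ∀ i : ι, f0 u i ≠ f0 v i) := by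
    intro u v huv
    constructor
    · intro hadj i
      match i with
      | Sum.inr _ => exact fun h => huv (hc_inj h)
      | Sum.inl (a, b) =>
        show (if a ≠ b ∧ ¬ G.Adj a b ∧ (u = a ∨ u = b) then n else c u) ≠
          (if a ≠ b ∧ ¬ G.Adj a b ∧ (v = a ∨ v = b) then n else c v)
        by_cases h1 : a ≠ b ∧ ¬ G.Adj a b ∧ (u = a ∨ u = b) <;>
          by_cases h2 : a ≠ b ∧ ¬ G.Adj a b ∧ (v = a ∨ v = b)
        · exfalso
          obtain ⟨-, hnadj, hu⟩ := h1
          obtain ⟨-, -, hv⟩ := h2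
          rcases hu with rfl | rfl <;> rcases hv with rfl | rfl
          · exact huv rfl
          · exact hnadj hadj
          · exact hnadj hadj.symm
          · exact huv rfl
        · rw [if_pos h1, if_neg h2]
          exact fun h => absurd (h ▸ hc_lt v) (lt_irrefl n)
        · rw [if_neg h1, if_pos h2]
          exact fun h => absurd (h ▸ hc_lt u) (by omega)
        · rw [if_neg h1, if_neg h2]
          exact fun h => huv (hc_inj h)
    · intro hall
      by_contra hnadj
      have h1 : f0 u (Sum.inl (u, v)) = n := if_pos ⟨huv, hnadj, Or.inl rfl⟩
      have h2 : f0 v (Sum.inl (u, v)) = n := if_pos ⟨huv, hnadj, Or.inr rfl⟩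
      exact hall (Sum.inl (u, v)) (h1.trans h2.symm)
  have : Nonempty ι := ⟨Sum.inr ()⟩
  refine ⟨Fintype.card ι, Fintype.card_pos, fun w j => f0 w ((Fintype.equivFin ι).symm j), ?_⟩
  intro u v huv
  rw [key u v huv]
  constructor
  · intro h j; exact h _
  · intro h i
    have := h (Fintype.equivFin ι i)
    simpa only [Equiv.symm_apply_apply] using this

/-- for every finite simple graph G, lbox(G) ≤ prod_dim(G). -/
theorem stmt14 {V : Type} [Fintype V] (G : SimpleGraph V) :
    lbox G ≤ prodDim G := by
  obtain ⟨k, hk, f, hf⟩ := exists_prodRep G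
  have hne : {k : ℕ | 0 < k ∧ ∃ f : V → Fin k → ℕ,
      ∀ u v : V, u ≠ v → (G.Adj u v ↔ ∀ i, f u i ≠ f v i)}.Nonempty := ⟨k, hk, f, hf⟩
  obtain ⟨-, g, hg⟩ := Nat.sInf_mem hne
  exact Nat.sInf_le (localBoxRep_of_prodRep G _ g hg)
end

section
/- For every finite poset P whose comparability graph G_P has at least one edge, ldim(P) ≤ 2 · prod_dim(G_P) + 1. -/
open Classical

section AuxProof

open Finset in
/-- In a nodup list sorted (pairwise) by `r`, if `¬ r y x` then `x` comes before `y`. -/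
lemma indexOf_lt_of_sorted {α : Type} [DecidableEq α] {r : α → α → Prop} {l : List α}
    (hs : l.Pairwise r) (hn : l.Nodup) {x y : α} (hx : x ∈ l) (hy : y ∈ l)
    (hxy : x ≠ y) (hr : ¬ r y x) : l.idxOf x < l.idxOf y := by
  have hxl : l.idxOf x < l.length := List.idxOf_lt_length_iff.2 hx
  have hyl : l.idxOf y < l.length := List.idxOf_lt_length_iff.2 hy
  have hne : l.idxOf x ≠ l.idxOf y := by
    intro he
    apply hxy
    have h1 := List.idxOf_get hxl
    have h2 := List.idxOf_get hyl
    rw [← h1, ← h2]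
    congr 1
    exact Fin.ext he
  rcases lt_or_gt_of_ne hne with hlt | hgt
  · exact hlt
  · exfalso
    apply hr
    have := List.pairwise_iff_get.1 hs ⟨_, hyl⟩ ⟨_, hxl⟩ hgt
    rwa [List.idxOf_get hxl, List.idxOf_get hyl] at this

/-- Transport a local realizer indexed by any fintype into a bound on `ldim`. -/
lemma ldim_le_of_family {α : Type} [Fintype α] [DecidableEq α] [PartialOrder α]
    {ι : Type} [Fintype ι] (L : ι → List α) {t : ℕ}
    (h1 : ∀ i, IsPLE (L i))
    (h2 : ∀ x y : α, x < y → ∃ i, Below (L i) x y)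
    (h3 : ∀ x y : α, ¬ x ≤ y → ¬ y ≤ x → (∃ i, Below (L i) x y) ∧ (∃ i, Below (L i) y x))
    (hfreq : ∀ x : α, {i : ι | x ∈ L i}.ncard ≤ t) :
    ldim α ≤ t := by
  apply Nat.sInf_le
  refine ⟨Fintype.card ι, fun j => L ((Fintype.equivFin ι).symm j), ⟨fun j => h1 _, ?_, ?_⟩, ?_⟩
  · intro x y hxy
    obtain ⟨i, hi⟩ := h2 x y hxy
    exact ⟨Fintype.equivFin ι i, by simpa using hi⟩
  · intro x y hxy hyx
    obtain ⟨⟨i, hi⟩, ⟨i', hi'⟩⟩ := h3 x y hxy hyx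
    exact ⟨⟨Fintype.equivFin ι i, by simpa using hi⟩, ⟨Fintype.equivFin ι i', by simpa using hi'⟩⟩
  · intro x
    have hset : {j : Fin (Fintype.card ι) | x ∈ L ((Fintype.equivFin ι).symm j)}
        = (Fintype.equivFin ι) '' {i : ι | x ∈ L i} := by
      ext j
      simp [Set.mem_image_equiv]
    rw [hset, Set.ncard_image_of_injective _ (Fintype.equivFin ι).injective]
    exact hfreq x

/-- The class-value of `x` in coordinate `i`: the minimum (under a fixed enumeration)
of the enumeration-image of the set of elements agreeing with `x` in coordinate `i`. -/
noncomputable def mval {α : Type} [Fintype α] [DecidableEq α] {k : ℕ}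
    (f : α → Fin k → ℕ) (i : Fin k) (x : α) : WithBot (Fin (Fintype.card α)) :=
  ((Finset.univ.filter fun u => f u i = f x i).image (Fintype.equivFin α)).min

lemma mval_congr {α : Type} [Fintype α] [DecidableEq α] {k : ℕ}
    {f : α → Fin k → ℕ} {i : Fin k} {x y : α} (h : f x i = f y i) :
    mval f i x = mval f i y := by
  unfold mval
  rw [Finset.filter_congr (fun u _ => by rw [h] :
    ∀ u ∈ (Finset.univ : Finset α), f u i = f x i ↔ f u i = f y i)]

lemma mval_exists_coe {α : Type} [Fintype α] [DecidableEq α] {k : ℕ}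
    (f : α → Fin k → ℕ) (i : Fin k) (x : α) :
    ∃ c : Fin (Fintype.card α), mval f i x = ↑c := by
  apply Finset.min_of_mem (a := Fintype.equivFin α x)
  exact Finset.mem_image_of_mem _ (by simp)

lemma eq_of_mval_eq {α : Type} [Fintype α] [DecidableEq α] {k : ℕ}
    {f : α → Fin k → ℕ} {i : Fin k} {x y : α} (h : mval f i x = mval f i y) :
    f x i = f y i := by
  obtain ⟨c, hc⟩ := mval_exists_coe f i x
  have hcx := Finset.mem_of_min hc
  have hcy := Finset.mem_of_min ((h.symm).trans hc)
  obtain ⟨ux, hux, hex⟩ := Finset.mem_image.1 hcx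
  obtain ⟨uy, huy, hey⟩ := Finset.mem_image.1 hcy
  have huxy : ux = uy := (Fintype.equivFin α).injective (hex.trans hey.symm)
  have h1 := (Finset.mem_filter.1 hux).2
  have h2 := (Finset.mem_filter.1 huy).2
  rw [← h1, huxy, h2]

/-- A fixed enumeration-ordered list of all elements. -/
noncomputable def baseList (α : Type) [Fintype α] : List α :=
  (List.finRange (Fintype.card α)).map (Fintype.equivFin α).symm

lemma baseList_nodup (α : Type) [Fintype α] : (baseList α).Nodup :=
  (List.nodup_finRange _).map (Fintype.equivFin α).symm.injective

lemma baseList_pairwise (α : Type) [Fintype α] :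
    (baseList α).Pairwise (fun a b => Fintype.equivFin α a < Fintype.equivFin α b) := by
  refine List.Pairwise.map _ ?_ (List.pairwise_lt_finRange (Fintype.card α))
  intro a b hab
  simpa using hab

lemma mem_baseList {α : Type} [Fintype α] (x : α) : x ∈ baseList α :=
  List.mem_map.2 ⟨Fintype.equivFin α x, List.mem_finRange _, by simp⟩

/-- The (ascending or descending) list of the class of value `c` in coordinate `i`. -/
noncomputable def classList {α : Type} [Fintype α] [DecidableEq α] {k : ℕ}
    (b : Bool) (f : α → Fin k → ℕ) (i : Fin k) (c : Fin (Fintype.card α)) : List α :=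
  (if b then baseList α else (baseList α).reverse).filter
    (fun u => decide (mval f i u = (c : WithBot (Fin (Fintype.card α)))))

lemma mem_classList {α : Type} [Fintype α] [DecidableEq α] {k : ℕ}
    {b : Bool} {f : α → Fin k → ℕ} {i : Fin k} {c : Fin (Fintype.card α)} {x : α} :
    x ∈ classList b f i c ↔ mval f i x = (c : WithBot (Fin (Fintype.card α))) := by
  unfold classList
  cases b <;> simp [List.mem_filter, List.mem_reverse, mem_baseList]

lemma classList_nodup {α : Type} [Fintype α] [DecidableEq α] {k : ℕ}
    (b : Bool) (f : α → Fin k → ℕ) (i : Fin k) (c : Fin (Fintype.card α)) :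
    (classList b f i c).Nodup := by
  unfold classList
  cases b
  · exact (List.nodup_reverse.2 (baseList_nodup α)).filter _
  · exact (baseList_nodup α).filter _

lemma classList_pairwise_true {α : Type} [Fintype α] [DecidableEq α] {k : ℕ}
    (f : α → Fin k → ℕ) (i : Fin k) (c : Fin (Fintype.card α)) :
    (classList true f i c).Pairwise (fun a b => Fintype.equivFin α a < Fintype.equivFin α b) := by
  unfold classList
  simp only [if_pos]
  exact (baseList_pairwise α).filter _

lemma classList_pairwise_false {α : Type} [Fintype α] [DecidableEq α] {k : ℕ}
    (f : α → Fin k → ℕ) (i : Fin k) (c : Fin (Fintype.card α)) :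
    (classList false f i c).Pairwise (fun a b => Fintype.equivFin α b < Fintype.equivFin α a) := by
  unfold classList
  simp only [Bool.false_eq_true, if_neg, ite_false]
  exact (List.pairwise_reverse.2 (baseList_pairwise α)).filter _

/-- The sorting relation coming from a linear extension of the partial order. -/
def extRel (α : Type) [PartialOrder α] : α → α → Prop :=
  fun a b => toLinearExtension a ≤ toLinearExtension b

lemma extRel_antisymm {α : Type} [PartialOrder α] {a b : α}
    (h1 : extRel α a b) (h2 : extRel α b a) : a = b :=
  le_antisymm (a := toLinearExtension a) (b := toLinearExtension b) h1 h2

instance extRelTrans (α : Type) [PartialOrder α] : IsTrans α (extRel α) :=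
  ⟨fun _ _ _ h1 h2 => le_trans h1 h2⟩

instance extRelAnti (α : Type) [PartialOrder α] : IsAntisymm α (extRel α) :=
  ⟨fun _ _ h1 h2 => extRel_antisymm h1 h2⟩

instance extRelTotal (α : Type) [PartialOrder α] : IsTotal α (extRel α) :=
  ⟨fun _ _ => le_total _ _⟩

lemma extRel_of_le {α : Type} [PartialOrder α] {a b : α} (h : a ≤ b) : extRel α a b :=
  toLinearExtension.monotone h

/-- A linear extension of the whole poset, as a sorted list. -/
noncomputable def extList (α : Type) [Fintype α] [PartialOrder α] : List α :=
  @Finset.sort α Finset.univ (extRel α) (Classical.decRel _) _ _ _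

lemma extList_nodup (α : Type) [Fintype α] [PartialOrder α] : (extList α).Nodup := by
  unfold extList
  exact @Finset.sort_nodup α Finset.univ (extRel α) (Classical.decRel _) _ _ _

lemma extList_pairwise (α : Type) [Fintype α] [PartialOrder α] :
    (extList α).Pairwise (extRel α) := by
  unfold extList
  exact @Finset.pairwise_sort α Finset.univ (extRel α) (Classical.decRel _) _ _ _

lemma mem_extList {α : Type} [Fintype α] [PartialOrder α] (x : α) : x ∈ extList α := by
  unfold extList
  rw [Finset.mem_sort]
  exact Finset.mem_univ x

/-- The main construction: a product representation of the comparability graph with `k`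
coordinates yields a local realizer with every element in at most `2k+1` ple's. -/
lemma ldim_le_of_prodRep {α : Type} [Fintype α] [DecidableEq α] [PartialOrder α] {k : ℕ}
    (f : α → Fin k → ℕ)
    (hf : ∀ u v : α, u ≠ v → ((compGraph α).Adj u v ↔ ∀ i, f u i ≠ f v i)) :
    ldim α ≤ 2 * k + 1 := by
  classical
  set n := Fintype.card α with hn
  let ι : Type := (Fin k × Fin n × Bool) ⊕ Unit
  let L : ι → List α := fun j =>
    match j with
    | Sum.inl (i, c, b) => classList b f i c
    | Sum.inr _ => extList α
  have hL1 : ∀ j, IsPLE (L j) := by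
    rintro (⟨i, c, b⟩ | _)
    · constructor
      · exact classList_nodup b f i c
      · intro x hx y hy hxy
        rcases eq_or_ne x y with rfl | hne
        · exact le_refl _
        · exfalso
          have h1 := mem_classList.1 hx
          have h2 := mem_classList.1 hy
          have hfeq : f x i = f y i := eq_of_mval_eq (h1.trans h2.symm)
          have hadj : (compGraph α).Adj x y := ⟨hne, Or.inl hxy⟩
          exact (hf x y hne).1 hadj i hfeq
    · constructor
      · exact extList_nodup α
      · intro x hx y hy hxy
        rcases eq_or_ne x y with rfl | hne
        · exact le_refl _
        · apply le_of_lt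
          apply indexOf_lt_of_sorted (extList_pairwise α) (extList_nodup α) hx hy hne
          intro hyx
          exact hne (extRel_antisymm (extRel_of_le hxy) hyx)
  have hL2 : ∀ x y : α, x < y → ∃ j, Below (L j) x y := by
    intro x y hxy
    refine ⟨Sum.inr (), mem_extList x, mem_extList y, ?_⟩
    apply indexOf_lt_of_sorted (extList_pairwise α) (extList_nodup α)
      (mem_extList x) (mem_extList y) hxy.ne
    intro hyx
    exact hxy.ne (extRel_antisymm (extRel_of_le hxy.le) hyx)
  have hL3 : ∀ x y : α, ¬ x ≤ y → ¬ y ≤ x →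
      (∃ j, Below (L j) x y) ∧ (∃ j, Below (L j) y x) := by
    intro x y hxy hyx
    have hne : x ≠ y := by
      intro he
      exact hxy (he ▸ le_refl x)
    have hnadj : ¬ (compGraph α).Adj x y := by
      rintro ⟨-, h | h⟩
      · exact hxy h
      · exact hyx h
    have hex : ∃ i, f x i = f y i := by
      by_contra hno
      push_neg at hno
      exact hnadj ((hf x y hne).2 hno)
    obtain ⟨i, hi⟩ := hex
    obtain ⟨c, hc⟩ := mval_exists_coe f i x
    have hcy : mval f i y = (c : WithBot (Fin n)) := (mval_congr hi).symm.trans hc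
    have hmx : ∀ b, x ∈ classList b f i c := fun b => mem_classList.2 hc
    have hmy : ∀ b, y ∈ classList b f i c := fun b => mem_classList.2 hcy
    have hene : Fintype.equivFin α x ≠ Fintype.equivFin α y :=
      fun he => hne ((Fintype.equivFin α).injective he)
    rcases lt_or_gt_of_ne hene with hlt | hgt
    · constructor
      · refine ⟨Sum.inl (i, c, true), hmx true, hmy true, ?_⟩
        exact indexOf_lt_of_sorted (classList_pairwise_true f i c) (classList_nodup _ f i c)
          (hmx true) (hmy true) hne (fun hcon => lt_asymm hlt hcon)
      · refine ⟨Sum.inl (i, c, false), hmy false, hmx false, ?_⟩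
        exact indexOf_lt_of_sorted (classList_pairwise_false f i c) (classList_nodup _ f i c)
          (hmy false) (hmx false) hne.symm (fun hcon => lt_asymm hlt hcon)
    · constructor
      · refine ⟨Sum.inl (i, c, false), hmx false, hmy false, ?_⟩
        exact indexOf_lt_of_sorted (classList_pairwise_false f i c) (classList_nodup _ f i c)
          (hmx false) (hmy false) hne (fun hcon => lt_asymm hgt hcon)
      · refine ⟨Sum.inl (i, c, true), hmy true, hmx true, ?_⟩
        exact indexOf_lt_of_sorted (classList_pairwise_true f i c) (classList_nodup _ f i c)
          (hmy true) (hmx true) hne.symm (fun hcon => lt_asymm hgt hcon)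
  have hfreq : ∀ x : α, {j : ι | x ∈ L j}.ncard ≤ 2 * k + 1 := by
    intro x
    set g : Fin k × Bool → ι := fun p =>
      Sum.inl (p.1, WithBot.unbotD (Fintype.equivFin α x) (mval f p.1 x), p.2) with hg
    have hsub : {j : ι | x ∈ L j} ⊆ Set.range g ∪ {Sum.inr ()} := by
      rintro (⟨i, c, b⟩ | u) hj
      · left
        have hc : mval f i x = (c : WithBot (Fin n)) := mem_classList.1 hj
        refine ⟨(i, b), ?_⟩
        simp [hg, hc, WithBot.unbotD_coe]
      · right
        simp
    calc {j : ι | x ∈ L j}.ncard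
        ≤ (Set.range g ∪ {Sum.inr ()}).ncard := Set.ncard_le_ncard hsub (Set.toFinite _)
      _ ≤ (Set.range g).ncard + ({Sum.inr ()} : Set ι).ncard := Set.ncard_union_le _ _
      _ ≤ 2 * k + 1 := by
          have h1 : (Set.range g).ncard ≤ 2 * k := by
            rw [← Set.image_univ]
            calc (g '' Set.univ).ncard ≤ (Set.univ : Set (Fin k × Bool)).ncard :=
                  Set.ncard_image_le (Set.toFinite _)
              _ = 2 * k := by
                  rw [Set.ncard_univ]
                  simp [Nat.card_eq_fintype_card, Nat.mul_comm]
          have h2 := Set.ncard_singleton (Sum.inr () : ι)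
          omega
  exact ldim_le_of_family L hL1 hL2 hL3 hfreq

/-- Every finite poset's comparability graph admits some product representation. -/
lemma prodRep_exists (α : Type) [Fintype α] [DecidableEq α] [PartialOrder α] :
    ∃ k : ℕ, 0 < k ∧ ∃ f : α → Fin k → ℕ,
      ∀ u v : α, u ≠ v → ((compGraph α).Adj u v ↔ ∀ i, f u i ≠ f v i) := by
  classical
  set e := Fintype.equivFin α with he
  set s : Finset (α × α) :=
    Finset.univ.filter (fun p => p.1 ≠ p.2 ∧ ¬ (compGraph α).Adj p.1 p.2) with hs
  refine ⟨s.card + 1, Nat.succ_pos _, ?_⟩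
  refine ⟨fun v i => Fin.cases ((e v : ℕ) + 1)
    (fun j => if v = ((s.equivFin.symm j : s) : α × α).1 ∨
        v = ((s.equivFin.symm j : s) : α × α).2 then 0 else (e v : ℕ) + 1) i, ?_⟩
  intro u v huv
  constructor
  · intro hadj i
    induction i using Fin.cases with
    | zero =>
      simp only [Fin.cases_zero]
      intro hcon
      exact huv (e.injective (Fin.val_injective (Nat.add_right_cancel hcon)))
    | succ j =>
      simp only [Fin.cases_succ]
      obtain ⟨-, hab1, hab2⟩ := Finset.mem_filter.1 (s.equivFin.symm j : s).2
      set a := ((s.equivFin.symm j : s) : α × α).1 with ha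
      set b := ((s.equivFin.symm j : s) : α × α).2 with hb
      by_cases hu : u = a ∨ u = b <;> by_cases hv : v = a ∨ v = b
      · exfalso
        rcases hu with rfl | rfl <;> rcases hv with rfl | rfl
        · exact huv rfl
        · exact hab2 hadj
        · exact hab2 ((compGraph α).adj_symm hadj)
        · exact huv rfl
      · simp only [if_pos hu, if_neg hv]
        omega
      · simp only [if_neg hu, if_pos hv]
        omega
      · simp only [if_neg hu, if_neg hv]
        intro hcon
        exact huv (e.injective (Fin.val_injective (Nat.add_right_cancel hcon)))
  · intro hall
    by_contra hnadj
    have hmem : (u, v) ∈ s := by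
      rw [hs]
      exact Finset.mem_filter.2 ⟨Finset.mem_univ _, huv, hnadj⟩
    apply hall (s.equivFin ⟨(u, v), hmem⟩).succ
    simp only [Fin.cases_succ, Equiv.symm_apply_apply]
    simp

end AuxProof

/-- for every finite poset whose comparability graph has at least
one edge, ldim(P) ≤ 2·prod_dim(G_P) + 1. -/
theorem stmt15 {α : Type} [Fintype α] [DecidableEq α] [PartialOrder α]
    (h : ∃ x y : α, (compGraph α).Adj x y) :
    ldim α ≤ 2 * prodDim (compGraph α) + 1 := by
  classical
  have hne : {k : ℕ | 0 < k ∧ ∃ f : α → Fin k → ℕ,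
      ∀ u v : α, u ≠ v → ((compGraph α).Adj u v ↔ ∀ i, f u i ≠ f v i)}.Nonempty := by
    obtain ⟨k, hk, f, hf⟩ := prodRep_exists α
    exact ⟨k, hk, f, hf⟩
  have hmem : prodDim (compGraph α) ∈ {k : ℕ | 0 < k ∧ ∃ f : α → Fin k → ℕ,
      ∀ u v : α, u ≠ v → ((compGraph α).Adj u v ↔ ∀ i, f u i ≠ f v i)} := Nat.sInf_mem hne
  obtain ⟨-, f, hf⟩ := hmem
  exact ldim_le_of_prodRep f hf
end

section
/- For every positive integer n, the Roberts graph R_n (the graph obtained from the complete graph on 2n vertices by removing a perfect matching) has local boxicity at most 1. -/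
open Classical

/-- The Roberts graph: vertices a_i = (i, false), b_i = (i, true); two distinct
vertices are adjacent iff they do not form a pair {a_i, b_i}, i.e. iff their
indices differ. -/
def RobertsGraph (n : ℕ) : SimpleGraph (Fin n × Bool) where
  Adj u v := u.1 ≠ v.1
  symm := ⟨fun _ _ h => h.symm⟩
  loopless := ⟨fun _ h => h rfl⟩

/-- Auxiliary: the interval graph whose only non-edge is the pair with index `i`. -/
def RobAux (n : ℕ) (i : Fin n) : SimpleGraph (Fin n × Bool) where
  Adj u v := u ≠ v ∧ ¬ (u.1 = i ∧ v.1 = i)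
  symm := ⟨fun _ _ h => ⟨h.1.symm, fun hc => h.2 ⟨hc.2, hc.1⟩⟩⟩
  loopless := ⟨fun _ h => h.1 rfl⟩

/-- the Roberts graph has local boxicity at most 1. -/
theorem stmt16 (n : ℕ) (hn : 1 ≤ n) : lbox (RobertsGraph n) ≤ 1 := by
  have hrep : LocalBoxRep (RobertsGraph n) 1 := by
    refine ⟨n, fun i => RobAux n i, ?_, ?_, ?_⟩
    · intro i
      refine ⟨fun u => if u.1 = i ∧ u.2 then 1 else 0,
        fun u => if u.1 = i ∧ ¬u.2 then 0 else 1, ?_⟩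
      intro u v huv
      constructor
      · rintro ⟨-, h⟩
        by_cases hui : u.1 = i
        · have hvi : v.1 ≠ i := fun hv => h ⟨hui, hv⟩
          cases hb : u.2
          · exact ⟨0, by simp [hui, hb], by simp [hvi]⟩
          · exact ⟨1, by simp [hui, hb], by simp [hvi]⟩
        · cases hb : v.2
          · exact ⟨0, by simp [hui], by simp only [hb, Set.mem_Icc]; constructor <;> split <;> simp_all⟩
          · exact ⟨1, by simp [hui], by simp only [hb, Set.mem_Icc]; constructor <;> split <;> simp_all⟩
      · rintro ⟨x, hx1, hx2⟩
        refine ⟨huv, ?_⟩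
        rintro ⟨hui, hvi⟩
        have hb : u.2 ≠ v.2 := fun hb => huv (Prod.ext (hui.trans hvi.symm) hb)
        cases hu2 : u.2 <;> cases hv2 : v.2
        · exact hb (hu2.trans hv2.symm)
        · simp [hui, hvi, hu2, hv2, Set.mem_Icc] at hx1 hx2
          linarith
        · simp [hui, hvi, hu2, hv2, Set.mem_Icc] at hx1 hx2
          linarith
        · exact hb (hu2.trans hv2.symm)
    · intro u v huv
      constructor
      · intro h i
        exact ⟨huv, fun hc => h (hc.1.trans hc.2.symm)⟩
      · intro h hc
        exact (h u.1).2 ⟨rfl, hc.symm⟩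
    · intro v
      have hsub : {i : Fin n | ¬ IsUniversal (RobAux n i) v} ⊆ {v.1} := by
        intro i hi
        by_contra hne
        apply hi
        intro u hu
        exact ⟨hu.symm, fun hc => hne (by simp [← hc.1])⟩
      calc {i : Fin n | ¬ IsUniversal (RobAux n i) v}.ncard
          ≤ ({v.1} : Set (Fin n)).ncard :=
            Set.ncard_le_ncard hsub (Set.finite_singleton _)
        _ = 1 := Set.ncard_singleton _
  exact Nat.sInf_le hrep
end

section
/- For every integer n ≥ 2, the crown poset S_n has local dimension at most 3. -/
open Classical

/-- Ground set of the crown poset S_n: a_i = (i, false), b_i = (i, true). -/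
def Crown (n : ℕ) : Type := Fin n × Bool

def Crown.toProd {n : ℕ} : Crown n → Fin n × Bool := fun x => x

instance (n : ℕ) : Fintype (Crown n) := inferInstanceAs (Fintype (Fin n × Bool))
instance (n : ℕ) : DecidableEq (Crown n) :=
  inferInstanceAs (DecidableEq (Fin n × Bool))

/-- The crown poset order: a_i < b_j iff i ≠ j, and these are the only strict
comparabilities. -/
instance crownOrder (n : ℕ) : PartialOrder (Crown n) where
  le x y := x = y ∨
    (x.toProd.2 = false ∧ y.toProd.2 = true ∧ x.toProd.1 ≠ y.toProd.1)
  le_refl x := Or.inl rfl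
  le_trans := by
    rintro a b c (rfl | ⟨h1, h2, h3⟩) h
    · exact h
    · rcases h with rfl | ⟨h4, h5, h6⟩
      · exact Or.inr ⟨h1, h2, h3⟩
      · rw [h2] at h4
        exact absurd h4 (by simp)
  le_antisymm := by
    rintro a b (rfl | ⟨h1, h2, h3⟩) h
    · rfl
    · rcases h with rfl | ⟨h4, h5, h6⟩
      · rfl
      · rw [h2] at h4
        exact absurd h4 (by simp)


namespace CrownAux

open List

@[simp] lemma toProd_eq {n : ℕ} (x : Crown n) : Crown.toProd x = x := rfl

lemma crown_le_iff {n : ℕ} (x y : Crown n) :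
    x ≤ y ↔ x = y ∨
      (x.toProd.2 = false ∧ y.toProd.2 = true ∧ x.toProd.1 ≠ y.toProd.1) := Iff.rfl

lemma indexOf_map' {α β : Type} [DecidableEq α] [DecidableEq β] (f : α → β)
    (hf : Function.Injective f) (a : α) :
    ∀ l : List α, (l.map f).idxOf (f a) = l.idxOf a
  | [] => rfl
  | b :: l => by
    by_cases h : b = a
    · subst h; simp
    · rw [List.map_cons, List.idxOf_cons_ne _ (fun he => h (hf he)),
        List.idxOf_cons_ne _ h, indexOf_map' f hf a l]

def fA (n : ℕ) (i : Fin n) : Crown n := (i, false)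
def fB (n : ℕ) (i : Fin n) : Crown n := (i, true)
def fA' (n : ℕ) (i : Fin n) : Crown n := (i.rev, false)
def fB' (n : ℕ) (i : Fin n) : Crown n := (i.rev, true)

lemma fA_inj (n : ℕ) : Function.Injective (fA n) := fun a b h =>
  congrArg (fun p : Fin n × Bool => p.1) h
lemma fB_inj (n : ℕ) : Function.Injective (fB n) := fun a b h =>
  congrArg (fun p : Fin n × Bool => p.1) h
lemma fA'_inj (n : ℕ) : Function.Injective (fA' n) := fun a b h =>
  Fin.rev_injective (congrArg (fun p : Fin n × Bool => p.1) h)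
lemma fB'_inj (n : ℕ) : Function.Injective (fB' n) := fun a b h =>
  Fin.rev_injective (congrArg (fun p : Fin n × Bool => p.1) h)

lemma fA'_rev {n : ℕ} (i : Fin n) : fA' n i.rev = fA n i := by
  simp [fA, fA', Fin.rev_rev]; rfl
lemma fB'_rev {n : ℕ} (i : Fin n) : fB' n i.rev = fB n i := by
  simp [fB, fB', Fin.rev_rev]; rfl

def L0 (n : ℕ) : List (Crown n) :=
  (List.finRange n).map (fA n) ++ (List.finRange n).map (fB n)
def L1 (n : ℕ) : List (Crown n) :=
  (List.finRange n).map (fA' n) ++ (List.finRange n).map (fB' n)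
def LD (n : ℕ) (j : Fin n) : List (Crown n) := [fB n j, fA n j]

lemma memA0 {n : ℕ} (i : Fin n) : fA n i ∈ L0 n :=
  List.mem_append_left _ (List.mem_map_of_mem (List.mem_finRange i))
lemma memB0 {n : ℕ} (i : Fin n) : fB n i ∈ L0 n :=
  List.mem_append_right _ (List.mem_map_of_mem (List.mem_finRange i))
lemma memA1 {n : ℕ} (i : Fin n) : fA n i ∈ L1 n := by
  rw [← fA'_rev]
  exact List.mem_append_left _ (List.mem_map_of_mem (List.mem_finRange i.rev))
lemma memB1 {n : ℕ} (i : Fin n) : fB n i ∈ L1 n := by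
  rw [← fB'_rev]
  exact List.mem_append_right _ (List.mem_map_of_mem (List.mem_finRange i.rev))

lemma notmemA {n : ℕ} (i : Fin n) : fB n i ∉ (List.finRange n).map (fA n) := by
  intro hmem
  obtain ⟨x, -, hx⟩ := List.mem_map.1 hmem
  exact Bool.false_ne_true (congrArg (fun p : Fin n × Bool => p.2) hx)
lemma notmemA' {n : ℕ} (i : Fin n) : fB' n i ∉ (List.finRange n).map (fA' n) := by
  intro hmem
  obtain ⟨x, -, hx⟩ := List.mem_map.1 hmem
  exact Bool.false_ne_true (congrArg (fun p : Fin n × Bool => p.2) hx)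

lemma idxA0 {n : ℕ} (i : Fin n) : (L0 n).idxOf (fA n i) = i.val := by
  rw [L0, List.idxOf_append_of_mem (List.mem_map_of_mem (List.mem_finRange i)),
    indexOf_map' (fA n) (fA_inj n)]
  simp

lemma idxB0 {n : ℕ} (i : Fin n) : (L0 n).idxOf (fB n i) = n + i.val := by
  rw [L0, List.idxOf_append_of_notMem (notmemA i),
    indexOf_map' (fB n) (fB_inj n)]
  simp

lemma idxA1 {n : ℕ} (i : Fin n) : (L1 n).idxOf (fA n i) = i.rev.val := by
  rw [← fA'_rev, L1,
    List.idxOf_append_of_mem (List.mem_map_of_mem (List.mem_finRange i.rev)),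
    indexOf_map' (fA' n) (fA'_inj n)]
  simp

lemma idxB1 {n : ℕ} (i : Fin n) : (L1 n).idxOf (fB n i) = n + i.rev.val := by
  rw [← fB'_rev, L1, List.idxOf_append_of_notMem (notmemA' i.rev),
    indexOf_map' (fB' n) (fB'_inj n)]
  simp

lemma nodupL0 (n : ℕ) : (L0 n).Nodup := by
  rw [L0, List.nodup_append]
  refine ⟨(List.nodup_finRange n).map (fA_inj n),
    (List.nodup_finRange n).map (fB_inj n), ?_⟩
  intro x hx y hy hxy
  subst hxy
  obtain ⟨a, -, rfl⟩ := List.mem_map.1 hx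
  obtain ⟨b, -, hb⟩ := List.mem_map.1 hy
  exact Bool.noConfusion (congrArg (fun p : Fin n × Bool => p.2) hb)

lemma nodupL1 (n : ℕ) : (L1 n).Nodup := by
  rw [L1, List.nodup_append]
  refine ⟨(List.nodup_finRange n).map (fA'_inj n),
    (List.nodup_finRange n).map (fB'_inj n), ?_⟩
  intro x hx y hy hxy
  subst hxy
  obtain ⟨a, -, rfl⟩ := List.mem_map.1 hx
  obtain ⟨b, -, hb⟩ := List.mem_map.1 hy
  exact Bool.noConfusion (congrArg (fun p : Fin n × Bool => p.2) hb)

lemma isPLE_L0 (n : ℕ) : IsPLE (L0 n) := by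
  refine ⟨nodupL0 n, ?_⟩
  intro x hx y hy hle
  rcases (crown_le_iff x y).1 hle with rfl | ⟨h1, h2, h3⟩
  · exact le_refl _
  · obtain ⟨i, c⟩ := x
    obtain ⟨j, d⟩ := y
    change c = false at h1; change d = true at h2
    subst h1; subst h2
    show (L0 n).idxOf (fA n i) ≤ (L0 n).idxOf (fB n j)
    rw [idxA0, idxB0]
    have := i.isLt
    omega

lemma isPLE_L1 (n : ℕ) : IsPLE (L1 n) := by
  refine ⟨nodupL1 n, ?_⟩
  intro x hx y hy hle
  rcases (crown_le_iff x y).1 hle with rfl | ⟨h1, h2, h3⟩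
  · exact le_refl _
  · obtain ⟨i, c⟩ := x
    obtain ⟨j, d⟩ := y
    change c = false at h1; change d = true at h2
    subst h1; subst h2
    show (L1 n).idxOf (fA n i) ≤ (L1 n).idxOf (fB n j)
    rw [idxA1, idxB1]
    have := i.rev.isLt
    omega

lemma neBA {n : ℕ} (j : Fin n) : fB n j ≠ fA n j := fun h =>
  Bool.noConfusion (congrArg (fun p : Fin n × Bool => p.2) h)

lemma isPLE_LD (n : ℕ) (j : Fin n) : IsPLE (LD n j) := by
  constructor
  · rw [LD]
    refine List.nodup_cons.2 ⟨?_, List.nodup_singleton _⟩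
    simp only [List.mem_singleton]
    exact neBA j
  · intro x hx y hy hle
    rcases (crown_le_iff x y).1 hle with rfl | ⟨h1, h2, h3⟩
    · exact le_refl _
    · simp only [LD, List.mem_cons, List.mem_singleton, List.not_mem_nil, or_false] at hx hy
      rcases hx with rfl | rfl
      · simp [fB, Crown.toProd] at h1
      · rcases hy with rfl | rfl
        · simp [fA, fB, Crown.toProd] at h3
        · simp [fA, Crown.toProd] at h2

lemma belowD {n : ℕ} (j : Fin n) : Below (LD n j) (fB n j) (fA n j) := by
  refine ⟨by simp [LD], by simp [LD], ?_⟩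
  rw [LD, List.idxOf_cons_self, List.idxOf_cons_ne _ (neBA j),
    List.idxOf_cons_self]
  exact Nat.zero_lt_one

lemma below0AB {n : ℕ} (i j : Fin n) : Below (L0 n) (fA n i) (fB n j) := by
  refine ⟨memA0 i, memB0 j, ?_⟩
  rw [idxA0, idxB0]
  have := i.isLt
  omega

lemma below0AA {n : ℕ} {i j : Fin n} (h : i < j) : Below (L0 n) (fA n i) (fA n j) :=
  ⟨memA0 i, memA0 j, by rw [idxA0, idxA0]; exact h⟩

lemma below1AA {n : ℕ} {i j : Fin n} (h : j < i) : Below (L1 n) (fA n i) (fA n j) :=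
  ⟨memA1 i, memA1 j, by rw [idxA1, idxA1]; exact Fin.rev_lt_rev.2 h⟩

lemma below0BB {n : ℕ} {i j : Fin n} (h : i < j) : Below (L0 n) (fB n i) (fB n j) :=
  ⟨memB0 i, memB0 j, by
    rw [idxB0, idxB0]; exact Nat.add_lt_add_left h n⟩

lemma below1BB {n : ℕ} {i j : Fin n} (h : j < i) : Below (L1 n) (fB n i) (fB n j) :=
  ⟨memB1 i, memB1 j, by
    rw [idxB1, idxB1]; exact Nat.add_lt_add_left (Fin.rev_lt_rev.2 h) n⟩

def crL (n : ℕ) (i : Fin (n + 2)) : List (Crown n) :=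
  if h : 2 ≤ i.val then LD n ⟨i.val - 2, by have := i.isLt; omega⟩
  else if i.val = 0 then L0 n else L1 n

lemma crL_zero {n : ℕ} (h : (0 : ℕ) < n + 2) : crL n ⟨0, h⟩ = L0 n := by
  simp [crL]

lemma crL_one {n : ℕ} (h : (1 : ℕ) < n + 2) : crL n ⟨1, h⟩ = L1 n := by
  simp [crL]

lemma crL_D {n : ℕ} (j : Fin n) (h : j.val + 2 < n + 2) :
    crL n ⟨j.val + 2, h⟩ = LD n j := by
  rw [crL, dif_pos (by omega : 2 ≤ j.val + 2)]
  congr 1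
  all_goals exact Fin.ext (by omega)

lemma hrealizer (n : ℕ) : IsLocalRealizer (crL n) := by
  refine ⟨?_, ?_, ?_⟩
  · intro i
    rw [crL]
    split_ifs with h1 h2
    · exact isPLE_LD n _
    · exact isPLE_L0 n
    · exact isPLE_L1 n
  · intro x y hxy
    rcases (crown_le_iff x y).1 hxy.le with heq | ⟨h1, h2, h3⟩
    · exact absurd heq hxy.ne
    · obtain ⟨i, c⟩ := x
      obtain ⟨j, d⟩ := y
      change c = false at h1; change d = true at h2
      subst h1; subst h2
      exact ⟨⟨0, by omega⟩, by rw [crL_zero]; exact below0AB i j⟩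
  · intro x y hxy hyx
    have hne : x ≠ y := fun h => hxy (h ▸ le_refl x)
    obtain ⟨i, c⟩ := x
    obtain ⟨j, d⟩ := y
    cases c <;> cases d
    · -- both false
      have hij : i ≠ j := fun h => hne (by rw [h])
      rcases lt_or_gt_of_ne hij with h | h
      · exact ⟨⟨⟨0, by omega⟩, by rw [crL_zero]; exact below0AA h⟩,
          ⟨⟨1, by omega⟩, by rw [crL_one]; exact below1AA h⟩⟩
      · exact ⟨⟨⟨1, by omega⟩, by rw [crL_one]; exact below1AA h⟩,
          ⟨⟨0, by omega⟩, by rw [crL_zero]; exact below0AA h⟩⟩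
    · -- x = a_i, y = b_j : incomparable forces i = j
      have hij : i = j := by
        by_contra h
        exact hxy ((crown_le_iff _ _).2 (Or.inr ⟨rfl, rfl, h⟩))
      subst hij
      refine ⟨⟨⟨0, by omega⟩, by rw [crL_zero]; exact below0AB i i⟩,
        ⟨⟨i.val + 2, by have := i.isLt; omega⟩, ?_⟩⟩
      rw [crL_D]
      exact belowD i
    · -- x = b_i, y = a_j : incomparable forces j = i
      have hij : j = i := by
        by_contra h
        exact hyx ((crown_le_iff _ _).2 (Or.inr ⟨rfl, rfl, h⟩))
      subst hij
      refine ⟨⟨⟨j.val + 2, by have := j.isLt; omega⟩, ?_⟩,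
        ⟨⟨0, by omega⟩, by rw [crL_zero]; exact below0AB j j⟩⟩
      rw [crL_D]
      exact belowD j
    · -- both true
      have hij : i ≠ j := fun h => hne (by rw [h])
      rcases lt_or_gt_of_ne hij with h | h
      · exact ⟨⟨⟨0, by omega⟩, by rw [crL_zero]; exact below0BB h⟩,
          ⟨⟨1, by omega⟩, by rw [crL_one]; exact below1BB h⟩⟩
      · exact ⟨⟨⟨1, by omega⟩, by rw [crL_one]; exact below1BB h⟩,
          ⟨⟨0, by omega⟩, by rw [crL_zero]; exact below0BB h⟩⟩

lemma freq_bound (n : ℕ) (x : Crown n) :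
    {i : Fin (n + 2) | x ∈ crL n i}.ncard ≤ 3 := by
  have hlt : x.toProd.1.val + 2 < n + 2 := by have := x.toProd.1.isLt; omega
  have hsub : {i : Fin (n + 2) | x ∈ crL n i} ⊆
      ({⟨0, by omega⟩, ⟨1, by omega⟩, ⟨x.toProd.1.val + 2, hlt⟩} :
        Set (Fin (n + 2))) := by
    intro i hi
    simp only [Set.mem_setOf_eq] at hi
    rw [crL] at hi
    split_ifs at hi with h1 h2
    · right; right
      have hx1 : x.toProd.1.val = i.val - 2 := by
        simp only [LD, List.mem_cons, List.mem_singleton, List.not_mem_nil,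
          or_false] at hi
        rcases hi with rfl | rfl <;> simp [fA, fB, Crown.toProd]
      refine Set.mem_singleton_iff.2 (Fin.ext ?_)
      simp only [hx1]
      omega
    · left; exact Fin.ext h2
    · right; left
      refine Fin.ext ?_
      show i.val = 1
      omega
  refine le_trans (Set.ncard_le_ncard hsub (Set.toFinite _)) ?_
  refine le_trans (Set.ncard_insert_le _ _) ?_
  have h2 := Set.ncard_insert_le (⟨1, by omega⟩ : Fin (n+2))
    ({⟨x.toProd.1.val + 2, hlt⟩} : Set (Fin (n+2)))
  rw [Set.ncard_singleton] at h2
  omega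

end CrownAux

/-- for every n ≥ 2, the crown poset S_n has local dimension at
most 3. -/
theorem stmt17 (n : ℕ) (hn : 2 ≤ n) : ldim (Crown n) ≤ 3 := by
  apply Nat.sInf_le
  exact ⟨n + 2, CrownAux.crL n, CrownAux.hrealizer n, CrownAux.freq_bound n⟩
end
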